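/- arXiv:1308.0827 — 3 statements merged into one kernel-verified Lean document; each statement's English description precedes it below -/
import Mathlib

section
/- For every integer g > 1, the graph G obtained from a star with g² + 1 vertices (one centre vertex joined to g² leaves) by replacing each edge by four parallel edges has tree-width one and contains the g×g grid J_g as an immersion. -/
open scoped Classical

noncomputable section

/-- A finite multigraph: a type of vertices, a type of edges, and a map
assigning to each edge its (unordered) pair of ends.  Loops and parallel
edges are allowed. -/
structure Multigraph where
  V : Type
  E : Type
  ends : E → Sym2 V

namespace Multigraph

/-- Walks in a multigraph, recording the edges used. -/
inductive Walk (G : Multigraph) : G.V → G.V → Type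
  | nil (v : G.V) : Walk G v v
  | cons (u v w : G.V) (e : G.E) (he : G.ends e = s(u, v)) (p : Walk G v w) : Walk G u w

namespace Walk

variable {G : Multigraph}

/-- The list of vertices visited by a walk, in order. -/
def support : {u v : G.V} → G.Walk u v → List G.V
  | _, _, .nil x => [x]
  | _, _, .cons u _ _ _ _ p => u :: p.support

/-- The list of edges used by a walk, in order. -/
def edges : {u v : G.V} → G.Walk u v → List G.E
  | _, _, .nil _ => []
  | _, _, .cons _ _ _ e _ p => e :: p.edges

/-- The number of edges of a walk. -/
def length : {u v : G.V} → G.Walk u v → ℕ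
  | _, _, .nil _ => 0
  | _, _, .cons _ _ _ _ _ p => p.length + 1

/-- A path: a walk with no repeated vertex. -/
def IsPath {u v : G.V} (p : G.Walk u v) : Prop := p.support.Nodup

/-- A cycle: a closed walk of positive length with no repeated edge and no
repeated vertex except for the first = last one. -/
def IsCycle {u v : G.V} (p : G.Walk u v) : Prop :=
  u = v ∧ 0 < p.length ∧ p.edges.Nodup ∧ p.support.tail.Nodup

end Walk

/-- An immersion ("strong immersion") of `H` in `G`. -/
structure Immersion (H G : Multigraph) where
  /-- the map on vertices -/
  vmap : H.V → G.V
  /-- first end of the walk representing an edge -/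
  ea : H.E → G.V
  /-- second end of the walk representing an edge -/
  eb : H.E → G.V
  /-- the walk representing an edge -/
  emap : (e : H.E) → G.Walk (ea e) (eb e)
  vmap_inj : Function.Injective vmap
  ends_eq : ∀ e : H.E, s(ea e, eb e) = (H.ends e).map vmap
  path_of_nonloop : ∀ e : H.E, ¬ (H.ends e).IsDiag → (emap e).IsPath
  cycle_of_loop : ∀ e : H.E, (H.ends e).IsDiag → (emap e).IsCycle
  not_mem_of_not_incident :
    ∀ (x : H.V) (e : H.E), x ∉ H.ends e → vmap x ∉ (emap e).support
  edges_disjoint :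
    ∀ e f : H.E, e ≠ f → ∀ d ∈ (emap e).edges, d ∉ (emap f).edges

/-- `G` contains `H` as an immersion. -/
def ImmersesIn (H G : Multigraph) : Prop := Nonempty (Immersion H G)

/-- `G` contains an `S`-rooted immersion of `H`: an immersion mapping every
vertex of `H` into `S`. -/
def RootedImmersesIn (H G : Multigraph) (S : Set G.V) : Prop :=
  ∃ η : Immersion H G, ∀ x : H.V, η.vmap x ∈ S

namespace Immersion

variable {H G : Multigraph}

/-- The vertex set of the image subgraph of an immersion. -/
def vertexSet (η : Immersion H G) : Set G.V :=
  Set.range η.vmap ∪ ⋃ e : H.E, {x | x ∈ (η.emap e).support}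

/-- The edge set of the image subgraph of an immersion. -/
def edgeSet (η : Immersion H G) : Set G.E :=
  ⋃ e : H.E, {d | d ∈ (η.emap e).edges}

/-- A subdivision map: an immersion in which two distinct edges may meet only
at images of common ends.  Its image is a subdivision of `H`. -/
def IsSubdivisionMap (η : Immersion H G) : Prop :=
  ∀ e f : H.E, e ≠ f → ∀ x : G.V, x ∈ (η.emap e).support → x ∈ (η.emap f).support →
    ∃ w : H.V, η.vmap w = x ∧ w ∈ H.ends e ∧ w ∈ H.ends f

/-- `x` is an internal vertex of the walk representing the edge `e`. -/
def IsInternal (η : Immersion H G) (e : H.E) (x : G.V) : Prop :=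
  x ∈ (η.emap e).support ∧ x ≠ η.ea e ∧ x ≠ η.eb e

/-- The vertex set of `η(H ∖ s)`: the union of the walks representing
the edges not incident with `s`, together with the images of the vertices
other than `s`. -/
def vertexSetAvoiding (η : Immersion H G) (s : H.V) : Set G.V :=
  η.vmap '' {v : H.V | v ≠ s} ∪
    ⋃ e ∈ {e : H.E | s ∉ H.ends e}, {x | x ∈ (η.emap e).support}

end Immersion

/-- A subgraph of a multigraph, given by a set of vertices and a set of edges. -/
structure Subgraph (G : Multigraph) where
  verts : Set G.V
  edges : Set G.E
  edge_closed : ∀ e ∈ edges, ∀ v ∈ G.ends e, v ∈ verts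

/-- A subgraph is connected if it is nonempty and any two of its vertices are
joined by a walk inside it. -/
def Subgraph.Connected {G : Multigraph} (X : Subgraph G) : Prop :=
  X.verts.Nonempty ∧ ∀ x ∈ X.verts, ∀ y ∈ X.verts, ∃ p : G.Walk x y,
    (∀ v ∈ p.support, v ∈ X.verts) ∧ ∀ d ∈ p.edges, d ∈ X.edges

/-- The degree of `x` with respect to a set `ES` of edges of `G`
(loops counting twice). -/
def degreeIn (G : Multigraph) [Fintype G.E] (ES : Set G.E) (x : G.V) : ℕ :=
  ∑ e : G.E, if e ∈ ES ∧ x ∈ G.ends e then (if (G.ends e).IsDiag then 2 else 1) else 0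

/-- A set of vertices is connected in `G` if any two of its members are joined
by a walk staying inside it. -/
def ConnectedIn (G : Multigraph) (S : Set G.V) : Prop :=
  ∀ x ∈ S, ∀ y ∈ S, ∃ p : G.Walk x y, ∀ z ∈ p.support, z ∈ S

/-- `H` is a minor of `G`: `H` is obtained from a subgraph of `G` by
contracting edges.  Equivalently there are nonempty, pairwise disjoint,
connected branch sets in `G`, one for each vertex of `H`, and an injection of
`E(H)` into `E(G)` sending each edge to an edge joining the corresponding
branch sets. -/
def IsMinor (H G : Multigraph) : Prop :=
  ∃ (β : H.V → Set G.V) (φ : H.E → G.E),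
    (∀ v, (β v).Nonempty) ∧
    (∀ v, G.ConnectedIn (β v)) ∧
    (Pairwise fun u v => Disjoint (β u) (β v)) ∧
    Function.Injective φ ∧
    (∀ (e : H.E) (u v : H.V), H.ends e = s(u, v) →
      ∃ x ∈ β u, ∃ y ∈ β v, G.ends (φ e) = s(x, y))

/-- Two vertices are 4-edge-connected: joined by four pairwise edge-disjoint
paths. -/
def EdgeConn4 (G : Multigraph) (u v : G.V) : Prop :=
  ∃ P : Fin 4 → G.Walk u v, (∀ i, (P i).IsPath) ∧
    ∀ i j, i ≠ j → ∀ e ∈ (P i).edges, e ∉ (P j).edges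

/-- A four-edge-connected multigraph. -/
def FourEdgeConnected (G : Multigraph) : Prop :=
  ∀ u v : G.V, u ≠ v → G.EdgeConn4 u v

/-- A tree-decomposition of a multigraph. -/
structure TreeDecomp (G : Multigraph) where
  ι : Type
  tree : SimpleGraph ι
  isTree : tree.IsTree
  bag : ι → Set G.V
  bag_covers : ∀ v : G.V, ∃ t, v ∈ bag t
  bag_edge : ∀ e : G.E, ∃ t, ∀ v ∈ G.ends e, v ∈ bag t
  bag_consistent : ∀ (t t'' : ι) (p : tree.Walk t t''), p.IsPath →
    ∀ t' ∈ p.support, bag t ∩ bag t'' ⊆ bag t'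

/-- `G` has a tree-decomposition of width at most `k`. -/
def HasWidthLE (G : Multigraph) (k : ℕ) : Prop :=
  ∃ D : TreeDecomp G, ∀ t, (D.bag t).ncard ≤ k + 1

/-- The tree-width of `G`: the least width of a tree-decomposition of `G`. -/
def treewidth (G : Multigraph) : ℕ := sInf {k | G.HasWidthLE k}

/-- The multigraph underlying a simple graph. -/
def ofSimple {V : Type} (G : SimpleGraph V) : Multigraph where
  V := V
  E := G.edgeSet
  ends := fun e => (e : Sym2 V)

end Multigraph

/-- The `g × g` grid, as a simple graph on `Fin g × Fin g`. -/
def gridSimple (g : ℕ) : SimpleGraph (Fin g × Fin g) where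
  Adj p q := Nat.dist p.1.1 q.1.1 + Nat.dist p.2.1 q.2.1 = 1
  symm := by
    constructor
    intro p q h
    simpa [Nat.dist_comm] using h
  loopless := by
    constructor
    intro p h
    simp [Nat.dist_self] at h

/-- The `g × g` grid `J_g`, as a multigraph. -/
def Grid (g : ℕ) : Multigraph := Multigraph.ofSimple (gridSimple g)

/-- The vertex set of the elementary wall of height `h`. -/
def wallVertSet (h : ℕ) : Set (ℕ × ℕ) :=
  {p | 1 ≤ p.1 ∧ p.1 ≤ h + 1 ∧ 1 ≤ p.2 ∧ p.2 ≤ 2 * h + 2 ∧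
    p ≠ (1, 2 * h + 2) ∧ p ≠ (h + 1, 1)}

/-- Adjacency in an elementary wall. -/
def wallAdj (p q : ℕ × ℕ) : Prop :=
  p ≠ q ∧ ((p.1 = q.1 ∧ Nat.dist p.2 q.2 = 1) ∨
    (p.2 = q.2 ∧ Nat.dist p.1 q.1 = 1 ∧ Even (min p.1 q.1 + p.2)))

/-- The elementary wall of height `h`, as a simple graph. -/
def elemWallSimple (h : ℕ) : SimpleGraph (wallVertSet h) where
  Adj a b := wallAdj a.1 b.1
  symm := by
    constructor
    rintro a b ⟨hne, hor⟩
    refine ⟨hne.symm, ?_⟩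
    rcases hor with ⟨h1, h2⟩ | ⟨h1, h2, h3⟩
    · exact Or.inl ⟨h1.symm, by rwa [Nat.dist_comm]⟩
    · exact Or.inr ⟨h1.symm, by rwa [Nat.dist_comm], by rwa [min_comm, ← h1]⟩
  loopless := by
    constructor
    rintro a ⟨hne, -⟩
    exact hne rfl

/-- The elementary wall of height `h`, as a multigraph. -/
def ElemWall (h : ℕ) : Multigraph := Multigraph.ofSimple (elemWallSimple h)

/-- The diagonal vertices `v_{i,2i}` `(2 ≤ i ≤ h)` of the elementary wall of
height `h`. -/
def diagVerts (h : ℕ) : Set (ElemWall h).V :=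
  {v | ∃ i : ℕ, 2 ≤ i ∧ i ≤ h ∧ v.1 = (i, 2 * i)}

/-- The surround of a vertex `s` of the wall `η`: all wall vertices `u` with
`u = s` or joined to `s` by a path of the wall in which every vertex other
than `s` has degree two in the wall. -/
def surround {h : ℕ} {G : Multigraph} [Fintype G.E]
    (η : Multigraph.Immersion (ElemWall h) G) (s : G.V) : Set G.V :=
  {u | u ∈ η.vertexSet ∧ (u = s ∨ ∃ p : G.Walk u s, p.IsPath ∧
    (∀ d ∈ p.edges, d ∈ η.edgeSet) ∧
    ∀ w ∈ p.support, w ≠ s → G.degreeIn η.edgeSet w = 2)}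

/-- A fin system `(W, (s_i, F_i, t_i)_{1 ≤ i ≤ b})` in `G`: a wall `W` in `G`
(presented by a subdivision map `η` of an elementary wall), distinct diagonal
vertices `s_1, …, s_b` of `W`, and for each `i` a fin `(s_i, F_i, t_i)`,
such that `s_i ∉ V(F_j)` for `i ≠ j`. -/
structure FinSystem (G : Multigraph) [Fintype G.E] (b : ℕ) where
  height : ℕ
  height_even : Even height
  height_ge : 2 ≤ height
  η : Multigraph.Immersion (ElemWall height) G
  η_sub : η.IsSubdivisionMap
  sv : Fin b → (ElemWall height).V
  sv_diag : ∀ i, sv i ∈ diagVerts height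
  sv_inj : Function.Injective sv
  t : Fin b → G.V
  t_wall : ∀ i, t i ∈ η.vertexSet
  t_not_surround : ∀ i, t i ∉ surround η (η.vmap (sv i))
  F : (i : Fin b) → G.Walk (η.vmap (sv i)) (t i)
  F_path : ∀ i, (F i).IsPath
  F_avoids_wall : ∀ i, ∀ d ∈ (F i).edges, d ∉ η.edgeSet
  s_not_mem_other : ∀ i j, i ≠ j → η.vmap (sv i) ∉ (F j).support

/-- The vertices `s_i` of a fin system. -/
def FinSystem.s {G : Multigraph} [Fintype G.E] {b : ℕ} (FS : FinSystem G b)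
    (i : Fin b) : G.V := FS.η.vmap (FS.sv i)

/-! ### The standard drawing of a wall and its distance function -/

/-- The position in the plane of a vertex of the elementary wall in its
standard drawing. -/
def elemPos {h : ℕ} (v : (ElemWall h).V) : ℝ × ℝ := ((v.1.2 : ℝ), (v.1.1 : ℝ))

/-- The point set of the standard drawing of a wall of height `h` (the union
of the straight-line segments representing the branches). -/
def wallDrawing (h : ℕ) : Set (ℝ × ℝ) :=
  ⋃ e : (ElemWall h).E,
    Sym2.lift ⟨fun a b => segment ℝ (elemPos a) (elemPos b),
      fun a b => segment_symm ℝ (elemPos a) (elemPos b)⟩ ((ElemWall h).ends e)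

/-- Index of the first occurrence of `x` in a list (0 if absent). -/
def idxIn {α : Type} (x : α) : List α → ℕ
  | [] => 0
  | a :: l => if x = a then 0 else idxIn x l + 1

/-- The position of an image of a branch vertex of the wall `η` in the
standard drawing. -/
def endPos {h : ℕ} {G : Multigraph}
    (η : Multigraph.Immersion (ElemWall h) G) (y : G.V) : ℝ × ℝ :=
  if hy : ∃ u : (ElemWall h).V, η.vmap u = y then elemPos hy.choose else (0, 0)

/-- The position in the plane of a vertex of the wall `η` in the standard
drawing: branch vertices are placed at lattice points, and the internal
vertices of each branch are spaced evenly along the corresponding segment. -/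
def wallVertPos {h : ℕ} {G : Multigraph}
    (η : Multigraph.Immersion (ElemWall h) G) (x : G.V) : ℝ × ℝ :=
  if hx : ∃ e : (ElemWall h).E, x ∈ (η.emap e).support then
    endPos η (η.ea hx.choose) +
      ((idxIn x (η.emap hx.choose).support : ℝ) / ((η.emap hx.choose).length : ℝ)) •
        (endPos η (η.eb hx.choose) - endPos η (η.ea hx.choose))
  else (0, 0)

/-- The distance between two points relative to a drawing `D` in the plane:
`0` if they are equal, and otherwise the minimum over all arcs `F` of the
plane (sets homeomorphic to `[0,1]`) with the two points as ends of the
number of points of `F` in `D`. -/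
def arcDist (D : Set (ℝ × ℝ)) (p q : ℝ × ℝ) : ℕ :=
  if p = q then 0 else
    sInf {n : ℕ | ∃ γ : ℝ → ℝ × ℝ, ContinuousOn γ (Set.Icc 0 1) ∧
      Set.InjOn γ (Set.Icc 0 1) ∧ γ 0 = p ∧ γ 1 = q ∧
      (γ '' Set.Icc 0 1 ∩ D).Finite ∧ (γ '' Set.Icc 0 1 ∩ D).ncard = n}

/-- The distance between two vertices of the wall `η` in its standard
drawing. -/
def wallDist {h : ℕ} {G : Multigraph}
    (η : Multigraph.Immersion (ElemWall h) G) (x y : G.V) : ℕ :=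
  arcDist (wallDrawing h) (wallVertPos η x) (wallVertPos η y)

end

/-- The star with `n` leaves in which every edge is replaced by four parallel
edges: the centre is `none`, the leaves are `some i`, and for each leaf there
are four parallel edges to the centre. -/
def fourStar (n : ℕ) : Multigraph where
  V := Option (Fin n)
  E := Fin n × Fin 4
  ends := fun e => s(none, some e.1)


namespace FourStarProof

/-! ### The star tree used for the tree-decomposition -/

def starTree (n : ℕ) : SimpleGraph (Option (Fin n)) where
  Adj a b := a ≠ b ∧ (a = none ∨ b = none)
  symm := by constructor; rintro a b ⟨h1, h2⟩; exact ⟨h1.symm, h2.symm⟩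
  loopless := by constructor; rintro a ⟨h1, -⟩; exact h1 rfl

lemma starTree_connected (n : ℕ) : (starTree n).Connected := by
  rw [SimpleGraph.connected_iff]
  refine ⟨fun a b => ?_, ⟨none⟩⟩
  have key : ∀ c : Option (Fin n), (starTree n).Reachable none c := by
    intro c
    rcases eq_or_ne c none with rfl | hc
    · rfl
    · exact SimpleGraph.Adj.reachable ⟨Ne.symm hc, Or.inl rfl⟩
  exact (key a).symm.trans (key b)

lemma starTree_acyclic (n : ℕ) : (starTree n).IsAcyclic := by
  have main : ∀ c : (starTree n).Walk none none, ¬ c.IsCycle := by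
    intro c hc
    cases c with
    | nil => exact hc.ne_nil rfl
    | cons h q =>
      rename_i a
      have ha : a ≠ none := (SimpleGraph.Adj.ne h).symm
      cases q with
      | nil => exact ha rfl
      | cons h' r =>
        rename_i b
        have hb : b = none := by
          rcases h'.2 with h2 | h2
          · exact absurd h2 ha
          · exact h2
        subst hb
        cases r with
        | nil =>
          have := hc.edges_nodup
          simp [SimpleGraph.Walk.edges_cons, Sym2.eq_swap] at this
        | cons h'' r' =>
          have hsn := hc.support_nodup
          simp only [SimpleGraph.Walk.support_cons, List.tail_cons] at hsn
          rw [List.nodup_cons] at hsn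
          have h1 := hsn.2
          rw [List.nodup_cons] at h1
          exact h1.1 (SimpleGraph.Walk.end_mem_support r')
  intro v c hc
  have h1 : ∃ x ∈ c.support, x = (none : Option (Fin n)) := by
    cases c with
    | nil => exact absurd rfl hc.ne_nil
    | cons h q =>
      rename_i a
      rcases h.2 with h2 | h2
      · exact ⟨v, by simp, h2⟩
      · exact ⟨a, by simp [SimpleGraph.Walk.support_cons], h2⟩
  obtain ⟨x, hx, rfl⟩ := h1
  exact main _ (hc.rotate hx)

lemma starTree_isTree (n : ℕ) : (starTree n).IsTree :=
  ⟨starTree_connected n, starTree_acyclic n⟩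

/-- The tree-decomposition of the four-fold star with bags `{none, t}`. -/
def starDecomp (n : ℕ) : Multigraph.TreeDecomp (fourStar n) where
  ι := Option (Fin n)
  tree := starTree n
  isTree := starTree_isTree n
  bag t := {none, t}
  bag_covers v := ⟨v, Or.inr rfl⟩
  bag_edge e := ⟨some e.1, by
    intro v hv
    rcases Sym2.mem_iff.mp hv with rfl | rfl; exacts [Or.inl rfl, Or.inr rfl]⟩
  bag_consistent := by
    intro t t'' p hp t' ht'
    rcases eq_or_ne t t'' with rfl | hne
    · have hnil : p = SimpleGraph.Walk.nil := SimpleGraph.Walk.isPath_iff_eq_nil.mp hp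
      subst hnil
      simp only [SimpleGraph.Walk.support_nil, List.mem_singleton] at ht'
      subst ht'
      intro x hx
      exact hx.1
    · intro x hx
      have hxn : x = none := by
        rcases hx.1 with h1 | h1
        · exact h1
        · rcases hx.2 with h2 | h2
          · exact h2
          · exact absurd (h1.symm.trans h2) hne
      subst hxn
      exact Or.inl rfl

/-! ### The grid immersion -/

variable {g : ℕ}

def enc (g : ℕ) : Fin g × Fin g ≃ Fin (g ^ 2) :=
  finProdFinEquiv.trans (finCongr (by ring))

def gpos (x : Fin g × Fin g) : ℕ × ℕ := (x.1.1, x.2.1)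

lemma gpos_inj : Function.Injective (gpos (g := g)) := by
  rintro ⟨a1, a2⟩ ⟨b1, b2⟩ h
  simp only [gpos, Prod.mk.injEq] at h
  exact Prod.ext (Fin.ext h.1) (Fin.ext h.2)

def dir (x y : Fin g × Fin g) : Fin 4 :=
  if x.1 = y.1 then (if x.2.1 < y.2.1 then 0 else 1)
  else (if x.1.1 < y.1.1 then 2 else 3)

def nbr (p : ℕ × ℕ) (k : Fin 4) : ℕ × ℕ :=
  if k = 0 then (p.1, p.2 + 1) else if k = 1 then (p.1, p.2 - 1)
  else if k = 2 then (p.1 + 1, p.2) else (p.1 - 1, p.2)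

lemma nbr_dir {x y : Fin g × Fin g} (h : (gridSimple g).Adj x y) :
    nbr (gpos x) (dir x y) = gpos y := by
  have h' : x.1.1 - y.1.1 + (y.1.1 - x.1.1) + (x.2.1 - y.2.1 + (y.2.1 - x.2.1)) = 1 := h
  by_cases hc : x.1 = y.1
  · have h11 : x.1.1 = y.1.1 := by rw [hc]
    by_cases hlt : x.2.1 < y.2.1
    · have h2 : y.2.1 = x.2.1 + 1 := by omega
      simp [nbr, dir, hc, hlt, gpos, h2, h11]
    · have h2 : x.2.1 = y.2.1 + 1 := by omega
      simp [nbr, dir, hc, hlt, gpos, h11]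
      omega
  · have h11 : x.1.1 ≠ y.1.1 := fun h => hc (Fin.ext h)
    by_cases hlt : x.1.1 < y.1.1
    · have h2 : y.1.1 = x.1.1 + 1 ∧ x.2.1 = y.2.1 := by omega
      simp [nbr, dir, hc, hlt, gpos, h2.1, h2.2]
    · have h2 : x.1.1 = y.1.1 + 1 ∧ x.2.1 = y.2.1 := by omega
      simp [nbr, dir, hc, hlt, gpos, h2.2]
      omega

noncomputable def A (e : (Grid g).E) : Fin g × Fin g := (Quot.out e.1).1
noncomputable def B (e : (Grid g).E) : Fin g × Fin g := (Quot.out e.1).2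

lemma mkAB (e : (Grid g).E) : s(A e, B e) = e.1 := by
  rw [A, B, Sym2.mk]
  exact Quot.out_eq _

lemma adjAB (e : (Grid g).E) : (gridSimple g).Adj (A e) (B e) := by
  have h := e.2
  rw [← mkAB e] at h
  exact ((gridSimple g).mem_edgeSet).mp h

lemma AneB (e : (Grid g).E) : A e ≠ B e := (adjAB e).ne

/-- The walk of length two through the centre representing a grid edge. -/
noncomputable def walkFor (e : (Grid g).E) :
    (fourStar (g ^ 2)).Walk (some (enc g (A e))) (some (enc g (B e))) :=
  Multigraph.Walk.cons (G := fourStar (g ^ 2)) (some (enc g (A e))) none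
    (some (enc g (B e))) (enc g (A e), dir (A e) (B e))
    (show s(none, some (enc g (A e))) = s(some (enc g (A e)), none) from Sym2.eq_swap)
    (Multigraph.Walk.cons (G := fourStar (g ^ 2)) none (some (enc g (B e)))
      (some (enc g (B e))) (enc g (B e), dir (B e) (A e)) rfl
      (Multigraph.Walk.nil (G := fourStar (g ^ 2)) (some (enc g (B e)))))

lemma support_walkFor (e : (Grid g).E) :
    (walkFor e).support = [some (enc g (A e)), none, some (enc g (B e))] := rfl

lemma edges_walkFor (e : (Grid g).E) :
    (walkFor e).edges =
      [(enc g (A e), dir (A e) (B e)), (enc g (B e), dir (B e) (A e))] := rfl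

/-- The Sym2 of positions determined by an edge of the four-fold star. -/
def key (d : Fin (g ^ 2) × Fin 4) : Sym2 (ℕ × ℕ) :=
  s(gpos ((enc g).symm d.1), nbr (gpos ((enc g).symm d.1)) d.2)

lemma key_walkFor (e : (Grid g).E) (d : Fin (g ^ 2) × Fin 4)
    (hd : d ∈ (walkFor e).edges) : key d = Sym2.map gpos e.1 := by
  rw [← mkAB e, Sym2.map_pair_eq]
  rw [edges_walkFor] at hd
  rcases List.mem_pair.mp hd with rfl | rfl
  · rw [key]
    simp only [Equiv.symm_apply_apply]
    rw [nbr_dir (adjAB e)]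
  · rw [key]
    simp only [Equiv.symm_apply_apply]
    rw [nbr_dir ((adjAB e).symm)]
    exact Sym2.eq_swap

/-- The immersion of the grid in the four-fold star. -/
noncomputable def gridImm (g : ℕ) : Multigraph.Immersion (Grid g) (fourStar (g ^ 2)) where
  vmap x := some (enc g x)
  ea e := some (enc g (A e))
  eb e := some (enc g (B e))
  emap e := walkFor e
  vmap_inj := fun x y h => (enc g).injective (Option.some_injective _ h)
  ends_eq := by
    intro e
    show s(some (enc g (A e)), some (enc g (B e))) = Sym2.map _ e.1
    rw [← mkAB e]
    exact (Sym2.map_pair_eq _ _ _).symm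
  path_of_nonloop := by
    intro e _
    show ((walkFor e).support).Nodup
    rw [support_walkFor]
    have hne : enc g (A e) ≠ enc g (B e) := fun h => AneB e ((enc g).injective h)
    show ([some (enc g (A e)), none, some (enc g (B e))] : List (Option (Fin (g ^ 2)))).Nodup
    simp [hne]
  cycle_of_loop := by
    intro e hd
    exfalso
    rw [show (Grid g).ends e = e.1 from rfl, ← mkAB e] at hd
    exact AneB e (Sym2.mk_isDiag_iff.mp hd)
  not_mem_of_not_incident := by
    intro x e hx hmem
    rw [support_walkFor] at hmem
    have hA : (A e : Fin g × Fin g) ∈ (Grid g).ends e := by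
      rw [show (Grid g).ends e = e.1 from rfl, ← mkAB e]
      exact Sym2.mem_mk_left _ _
    have hB : (B e : Fin g × Fin g) ∈ (Grid g).ends e := by
      rw [show (Grid g).ends e = e.1 from rfl, ← mkAB e]
      exact Sym2.mem_mk_right _ _
    change some (enc g x) ∈ ([some (enc g (A e)), none, some (enc g (B e))] : List (Option (Fin (g ^ 2)))) at hmem
    simp only [List.mem_cons, List.mem_singleton, List.not_mem_nil, or_false] at hmem
    rcases hmem with h | h | h
    · exact hx (by rwa [show x = A e from (enc g).injective (Option.some_injective _ h)])
    · exact Option.some_ne_none _ h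
    · exact hx (by rwa [show x = B e from (enc g).injective (Option.some_injective _ h)])
  edges_disjoint := by
    intro e f hef d hde hdf
    have h1 := key_walkFor e d hde
    have h2 := key_walkFor f d hdf
    have : Sym2.map gpos e.1 = Sym2.map gpos f.1 := h1 ▸ h2
    exact hef (Subtype.ext (Sym2.map.injective gpos_inj this))

end FourStarProof

/-- For every integer `g > 1`, the graph obtained from a
star with `g² + 1` vertices by replacing each edge by four parallel edges has
tree-width one and contains the `g × g` grid `J_g` as an immersion. -/
theorem fourStar_treewidth_one_and_grid_immersion (g : ℕ) (hg : 1 < g) :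
    (fourStar (g ^ 2)).treewidth = 1 ∧
      Multigraph.ImmersesIn (Grid g) (fourStar (g ^ 2)) := by
  constructor
  · have hn : 0 < g ^ 2 := by positivity
    have h1 : (fourStar (g ^ 2)).HasWidthLE 1 := by
      refine ⟨FourStarProof.starDecomp (g ^ 2), fun t => ?_⟩
      show ({none, t} : Set (Option (Fin (g ^ 2)))).ncard ≤ 2
      calc ({none, t} : Set (Option (Fin (g ^ 2)))).ncard
          ≤ ({t} : Set (Option (Fin (g ^ 2)))).ncard + 1 := Set.ncard_insert_le _ _
        _ ≤ 2 := Nat.add_le_add_right (Set.ncard_singleton (α := Option (Fin (g ^ 2))) t).le 1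
    have h0 : ¬ (fourStar (g ^ 2)).HasWidthLE 0 := by
      rintro ⟨D, hD⟩
      obtain ⟨t, ht⟩ := D.bag_edge (⟨0, hn⟩, 0)
      have hnone : (none : Option (Fin (g ^ 2))) ∈ D.bag t :=
        ht none (Sym2.mem_mk_left _ _)
      have hsome : (some ⟨0, hn⟩ : Option (Fin (g ^ 2))) ∈ D.bag t :=
        ht (some ⟨0, hn⟩) (Sym2.mem_mk_right _ _)
      have hsub : ({none, some ⟨0, hn⟩} : Set (Option (Fin (g ^ 2)))) ⊆ D.bag t := by
        intro x hx
        rcases hx with rfl | hx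
        · exact hnone
        · rw [Set.mem_singleton_iff] at hx; subst hx; exact hsome
      have h2 : 2 ≤ (D.bag t).ncard := by
        calc 2 = ({none, some ⟨0, hn⟩} : Set (Option (Fin (g ^ 2)))).ncard :=
              (Set.ncard_pair (by simp)).symm
          _ ≤ (D.bag t).ncard := Set.ncard_le_ncard hsub (Set.toFinite _)
      have h3 := hD t
      omega
    have hne : {k | (fourStar (g ^ 2)).HasWidthLE k}.Nonempty := ⟨1, h1⟩
    have hmem := Nat.sInf_mem hne
    refine le_antisymm (Nat.sInf_le h1) ?_
    refine Nat.one_le_iff_ne_zero.mpr fun h => h0 ?_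
    have h' : sInf {k | (fourStar (g ^ 2)).HasWidthLE k} = 0 := h
    rwa [h'] at hmem
  · exact ⟨FourStarProof.gridImm g⟩
end

section
/- Let T be a tree and let S be a set of vertices of T with |S| even. Then S can be partitioned into pairs {x_1,y_1}, …, {x_m,y_m} such that the paths of T joining x_i to y_i (1 ≤ i ≤ m) are pairwise edge-disjoint. -/
open scoped Classical

private lemma walk_edge_split {V : Type} {G : SimpleGraph V} {u v a b : V}
    (p : G.Walk u v) (he : s(a, b) ∈ p.edges) :
    (∃ (q : G.Walk u a) (r : G.Walk b v), q.length + 1 + r.length = p.length) ∨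
    (∃ (q : G.Walk u b) (r : G.Walk a v), q.length + 1 + r.length = p.length) := by
  induction p with
  | nil => simp at he
  | cons h p ih =>
    rw [SimpleGraph.Walk.edges_cons, List.mem_cons] at he
    rcases he with he | he
    · rw [Sym2.eq_iff] at he
      rcases he with ⟨rfl, rfl⟩ | ⟨rfl, rfl⟩
      · exact Or.inl ⟨.nil, p, by simp [SimpleGraph.Walk.length_cons]; omega⟩
      · exact Or.inr ⟨.nil, p, by simp [SimpleGraph.Walk.length_cons]; omega⟩
    · rcases ih he with ⟨q, r, hl⟩ | ⟨q, r, hl⟩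
      · exact Or.inl ⟨.cons h q, r, by simp [SimpleGraph.Walk.length_cons]; omega⟩
      · exact Or.inr ⟨.cons h q, r, by simp [SimpleGraph.Walk.length_cons]; omega⟩

private lemma sum_swap_lt {m : ℕ} (f g : Fin m → ℕ) (i j : Fin m) (hij : i ≠ j)
    (hk : ∀ k, k ≠ i → k ≠ j → g k = f k) (hlt : g i + g j < f i + f j) :
    ∑ k, g k < ∑ k, f k := by
  classical
  have hjm : j ∈ (Finset.univ.erase i) := Finset.mem_erase.2 ⟨hij.symm, Finset.mem_univ j⟩
  have hf1 := Finset.sum_erase_add Finset.univ f (Finset.mem_univ i)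
  have hf2 := Finset.sum_erase_add (Finset.univ.erase i) f hjm
  have hg1 := Finset.sum_erase_add Finset.univ g (Finset.mem_univ i)
  have hg2 := Finset.sum_erase_add (Finset.univ.erase i) g hjm
  have hcongr : ∑ k ∈ (Finset.univ.erase i).erase j, g k
      = ∑ k ∈ (Finset.univ.erase i).erase j, f k := by
    refine Finset.sum_congr rfl fun k hkm => ?_
    rw [Finset.mem_erase, Finset.mem_erase] at hkm
    exact hk k hkm.2.1 hkm.1
  omega

private lemma improve {V : Type} {T : SimpleGraph V} {S : Finset V} {m : ℕ}
    (x y : Fin m → V) (hinj : Function.Injective (Sum.elim x y))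
    (hrange : (↑S : Set V) = Set.range x ∪ Set.range y)
    (i j : Fin m) (hij : i ≠ j) (σ : Equiv.Perm (Fin m ⊕ Fin m))
    (hfix : ∀ k, k ≠ i → k ≠ j → σ (Sum.inl k) = Sum.inl k ∧ σ (Sum.inr k) = Sum.inr k)
    (hlt : T.dist (Sum.elim x y (σ (Sum.inl i))) (Sum.elim x y (σ (Sum.inr i)))
         + T.dist (Sum.elim x y (σ (Sum.inl j))) (Sum.elim x y (σ (Sum.inr j)))
         < T.dist (x i) (y i) + T.dist (x j) (y j)) :
    ∃ x' y' : Fin m → V, Function.Injective (Sum.elim x' y') ∧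
      (↑S : Set V) = Set.range x' ∪ Set.range y' ∧
      ∑ k, T.dist (x' k) (y' k) < ∑ k, T.dist (x k) (y k) := by
  classical
  set x' : Fin m → V := fun k => Sum.elim x y (σ (Sum.inl k)) with hx'
  set y' : Fin m → V := fun k => Sum.elim x y (σ (Sum.inr k)) with hy'
  have helim : Sum.elim x' y' = (Sum.elim x y) ∘ σ := by
    funext k
    rcases k with k | k <;> rfl
  refine ⟨x', y', ?_, ?_, ?_⟩
  · rw [helim]; exact hinj.comp σ.injective
  · have : Set.range x' ∪ Set.range y' = Set.range (Sum.elim x' y') :=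
      (Set.Sum.elim_range x' y').symm
    rw [this, helim, Set.range_comp (Sum.elim x y) σ, Set.range_eq_univ.mpr σ.surjective,
      Set.image_univ, Set.Sum.elim_range]
    exact hrange
  · refine sum_swap_lt _ _ i j hij ?_ hlt
    intro k hki hkj
    have := hfix k hki hkj
    simp only [hx', hy', this.1, this.2, Sum.elim_inl, Sum.elim_inr]

/-- Let `T` be a tree and `S` a set of vertices of `T` of
even cardinality.  Then `S` can be partitioned into pairs
`{x_1,y_1}, …, {x_m,y_m}` such that the paths of `T` joining `x_i` to `y_i`
are pairwise edge-disjoint. -/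
theorem tree_pairing_edge_disjoint {V : Type} [Fintype V]
    (T : SimpleGraph V) (hT : T.IsTree) (S : Finset V) (hS : Even S.card) :
    ∃ (m : ℕ) (x y : Fin m → V) (P : (i : Fin m) → T.Walk (x i) (y i)),
      Function.Injective (Sum.elim x y : Fin m ⊕ Fin m → V) ∧
      (↑S : Set V) = Set.range x ∪ Set.range y ∧
      (∀ i, (P i).IsPath) ∧
      (∀ i j, i ≠ j → ∀ e ∈ (P i).edges, e ∉ (P j).edges) := by
  classical
  obtain ⟨m, hm⟩ := hS
  -- initial pairing
  have hconn : T.Connected := hT.isConnected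
  set F : Fin m ⊕ Fin m → V :=
    fun s => ((S.equivFin.symm (finCongr hm.symm (finSumFinEquiv s))) : V) with hF
  have hFinj : Function.Injective F := by
    intro s t hst
    apply finSumFinEquiv.injective
    apply (finCongr hm.symm).injective
    apply S.equivFin.symm.injective
    exact Subtype.ext hst
  have hFrange : Set.range F = (↑S : Set V) := by
    apply subset_antisymm
    · rintro _ ⟨s, rfl⟩
      exact (S.equivFin.symm (finCongr hm.symm (finSumFinEquiv s))).2
    · intro v hv
      refine ⟨finSumFinEquiv.symm (finCongr hm (S.equivFin ⟨v, hv⟩)), ?_⟩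
      simp [hF]
  set N : Set ℕ := {n | ∃ x y : Fin m → V,
      Function.Injective (Sum.elim x y) ∧
      (↑S : Set V) = Set.range x ∪ Set.range y ∧
      ∑ k, T.dist (x k) (y k) = n} with hN
  have hN0 : N.Nonempty := by
    refine ⟨_, fun i => F (Sum.inl i), fun i => F (Sum.inr i), ?_, ?_, rfl⟩
    · have : Sum.elim (fun i => F (Sum.inl i)) (fun i => F (Sum.inr i)) = F := by
        funext k; rcases k with k | k <;> rfl
      rw [this]; exact hFinj
    · rw [← Set.Sum.elim_range]
      have : Sum.elim (fun i => F (Sum.inl i)) (fun i => F (Sum.inr i)) = F := by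
        funext k; rcases k with k | k <;> rfl
      rw [this, hFrange]
  obtain ⟨x, y, hinj, hrange, hsum⟩ := Nat.sInf_mem hN0
  -- paths realizing the distances
  have hP : ∀ k : Fin m, ∃ p : T.Walk (x k) (y k), p.IsPath ∧ p.length = T.dist (x k) (y k) := by
    intro k
    exact hconn.exists_path_of_dist (x k) (y k)
  choose P hPpath hPlen using hP
  refine ⟨m, x, y, P, hinj, hrange, hPpath, ?_⟩
  by_contra hcon
  push_neg at hcon
  obtain ⟨i, j, hij, e, hei, hej⟩ := hcon
  revert hei hej
  induction e using Sym2.ind with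
  | _ a b =>
  intro hei hej
  have key : ∃ x' y' : Fin m → V, Function.Injective (Sum.elim x' y') ∧
      (↑S : Set V) = Set.range x' ∪ Set.range y' ∧
      ∑ k, T.dist (x' k) (y' k) < ∑ k, T.dist (x k) (y k) := by
    have hli := hPlen i
    have hlj := hPlen j
    rcases walk_edge_split (P i) hei with ⟨qi, ri, hi⟩ | ⟨qi, ri, hi⟩ <;>
      rcases walk_edge_split (P j) hej with ⟨qj, rj, hj⟩ | ⟨qj, rj, hj⟩
    · -- i: a→b, j: a→b
      refine improve x y hinj hrange i j hij (Equiv.swap (Sum.inr i) (Sum.inl j)) ?_ ?_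
      · intro k hki hkj
        constructor <;> apply Equiv.swap_apply_of_ne_of_ne <;> simp [hki, hkj]
      · rw [Equiv.swap_apply_of_ne_of_ne (by simp) (by simp [hij]),
          Equiv.swap_apply_right, Equiv.swap_apply_left,
          Equiv.swap_apply_of_ne_of_ne (by simp [hij.symm]) (by simp)]
        simp only [Sum.elim_inl, Sum.elim_inr]
        have d1 := SimpleGraph.dist_le (qi.append qj.reverse)
        have d2 := SimpleGraph.dist_le (ri.reverse.append rj)
        simp only [SimpleGraph.Walk.length_append, SimpleGraph.Walk.length_reverse] at d1 d2
        omega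
    · -- i: a→b, j: b→a
      refine improve x y hinj hrange i j hij (Equiv.swap (Sum.inr i) (Sum.inr j)) ?_ ?_
      · intro k hki hkj
        constructor <;> apply Equiv.swap_apply_of_ne_of_ne <;> simp [hki, hkj]
      · rw [Equiv.swap_apply_of_ne_of_ne (by simp) (by simp),
          Equiv.swap_apply_left,
          Equiv.swap_apply_of_ne_of_ne (by simp) (by simp),
          Equiv.swap_apply_right]
        simp only [Sum.elim_inl, Sum.elim_inr]
        have d1 := SimpleGraph.dist_le (qi.append rj)
        have d2 := SimpleGraph.dist_le (qj.append ri)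
        simp only [SimpleGraph.Walk.length_append] at d1 d2
        omega
    · -- i: b→a, j: a→b
      refine improve x y hinj hrange i j hij (Equiv.swap (Sum.inr i) (Sum.inr j)) ?_ ?_
      · intro k hki hkj
        constructor <;> apply Equiv.swap_apply_of_ne_of_ne <;> simp [hki, hkj]
      · rw [Equiv.swap_apply_of_ne_of_ne (by simp) (by simp),
          Equiv.swap_apply_left,
          Equiv.swap_apply_of_ne_of_ne (by simp) (by simp),
          Equiv.swap_apply_right]
        simp only [Sum.elim_inl, Sum.elim_inr]
        have d1 := SimpleGraph.dist_le (qi.append rj)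
        have d2 := SimpleGraph.dist_le (qj.append ri)
        simp only [SimpleGraph.Walk.length_append] at d1 d2
        omega
    · -- i: b→a, j: b→a
      refine improve x y hinj hrange i j hij (Equiv.swap (Sum.inr i) (Sum.inl j)) ?_ ?_
      · intro k hki hkj
        constructor <;> apply Equiv.swap_apply_of_ne_of_ne <;> simp [hki, hkj]
      · rw [Equiv.swap_apply_of_ne_of_ne (by simp) (by simp [hij]),
          Equiv.swap_apply_right, Equiv.swap_apply_left,
          Equiv.swap_apply_of_ne_of_ne (by simp [hij.symm]) (by simp)]
        simp only [Sum.elim_inl, Sum.elim_inr]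
        have d1 := SimpleGraph.dist_le (qi.append qj.reverse)
        have d2 := SimpleGraph.dist_le (ri.reverse.append rj)
        simp only [SimpleGraph.Walk.length_append, SimpleGraph.Walk.length_reverse] at d1 d2
        omega
  obtain ⟨x', y', h1, h2, h3⟩ := key
  have : sInf N ≤ ∑ k, T.dist (x' k) (y' k) := Nat.sInf_le ⟨x', y', h1, h2, rfl⟩
  omega
end

section
/- Let G be a graph, let v be a vertex of G, and let T ⊆ V(G) with v ∉ T. Suppose there exist four pairwise edge-disjoint paths of G from v to T, each with no internal vertex in T, and suppose there exist three pairwise edge-disjoint paths of G from v to distinct vertices t_1, t_2, t_3 ∈ T respectively, each with no internal vertex in T. Then there exist four pairwise edge-disjoint paths P_1, P_2, P_3, P_4 of G from v to T, each with no internal vertex in T, such that P_1, P_2, P_3 have final vertices t_1, t_2, t_3 respectively. -/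
open scoped Classical

/-! ### Auxiliary machinery for Statement 15 -/

noncomputable section AugAux

open scoped Classical

namespace AugAux

variable {α β : Type*}

/-- Classical filter of a list by a `Prop`-valued predicate. -/
noncomputable def fil (P : α → Prop) : List α → List α
  | [] => []
  | a :: l => if P a then a :: fil P l else fil P l

/-- Classical count of a list by a `Prop`-valued predicate. -/
noncomputable def cnt (P : α → Prop) : List α → ℕ
  | [] => 0
  | a :: l => (if P a then 1 else 0) + cnt P l

@[simp] lemma cnt_nil (P : α → Prop) : cnt P ([] : List α) = 0 := rfl

@[simp] lemma cnt_cons (P : α → Prop) (a : α) (l : List α) :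
    cnt P (a :: l) = (if P a then 1 else 0) + cnt P l := rfl

lemma cnt_append (P : α → Prop) (l₁ l₂ : List α) :
    cnt P (l₁ ++ l₂) = cnt P l₁ + cnt P l₂ := by
  induction l₁ with
  | nil => simp [cnt]
  | cons a l ih => simp [cnt, ih]; ring

@[simp] lemma mem_fil {P : α → Prop} {l : List α} {x : α} :
    x ∈ fil P l ↔ x ∈ l ∧ P x := by
  induction l with
  | nil => simp [fil]
  | cons a l ih =>
    by_cases h : P a
    · simp only [fil, if_pos h, List.mem_cons, ih]
      constructor
      · rintro (rfl | ⟨h', hP⟩)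
        · exact ⟨Or.inl rfl, h⟩
        · exact ⟨Or.inr h', hP⟩
      · rintro ⟨rfl | h', hP⟩
        · exact Or.inl rfl
        · exact Or.inr ⟨h', hP⟩
    · simp only [fil, if_neg h, ih, List.mem_cons]
      constructor
      · rintro ⟨h', hP⟩
        exact ⟨Or.inr h', hP⟩
      · rintro ⟨rfl | h', hP⟩
        · exact absurd hP h
        · exact ⟨h', hP⟩

lemma fil_sublist (P : α → Prop) (l : List α) : List.Sublist (fil P l) l := by
  induction l with
  | nil => simp [fil]
  | cons a l ih =>
    by_cases h : P a
    · simpa [fil, h] using ih.cons₂ a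
    · simpa [fil, h] using ih.cons a

lemma cnt_fil_split (P Q : α → Prop) (l : List α) :
    cnt P (fil Q l) + cnt P (fil (fun a => ¬ Q a) l) = cnt P l := by
  induction l with
  | nil => simp [fil]
  | cons a l ih =>
    by_cases h : Q a <;> by_cases hp : P a <;>
      simp [fil, h, hp, cnt] <;> omega

lemma cnt_pos_iff {P : α → Prop} {l : List α} :
    1 ≤ cnt P l ↔ ∃ x ∈ l, P x := by
  induction l with
  | nil => simp [cnt]
  | cons a l ih =>
    by_cases h : P a
    · simp only [cnt_cons, if_pos h]
      constructor
      · intro _; exact ⟨a, List.mem_cons_self, h⟩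
      · intro _; omega
    · simp only [cnt_cons, h, if_neg, if_false, zero_add, ih]
      constructor
      · rintro ⟨x, hx, hPx⟩; exact ⟨x, List.mem_cons_of_mem _ hx, hPx⟩
      · rintro ⟨x, hx, hPx⟩
        rcases List.mem_cons.mp hx with rfl | hx
        · exact absurd hPx h
        · exact ⟨x, hx, hPx⟩

lemma cnt_eq_zero_iff {P : α → Prop} {l : List α} :
    cnt P l = 0 ↔ ∀ x ∈ l, ¬ P x := by
  induction l with
  | nil => simp [cnt]
  | cons a l ih =>
    by_cases h : P a
    · simp only [cnt_cons, if_pos h]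
      constructor
      · omega
      · intro H; exact absurd (H a (List.mem_cons_self) h) (by simp)
    · simp only [cnt_cons, if_neg h, zero_add, ih]
      constructor
      · intro H x hx hPx
        rcases List.mem_cons.mp hx with rfl | hx'
        · exact h hPx
        · exact H x hx' hPx
      · intro H x hx; exact H x (List.mem_cons_of_mem _ hx)

lemma cnt_le_of_sublist (P : α → Prop) {l₁ l₂ : List α} (h : List.Sublist l₁ l₂) :
    cnt P l₁ ≤ cnt P l₂ := by
  induction h with
  | slnil => exact le_refl _
  | cons a h ih => simp [cnt]; omega
  | cons_cons a h ih => simp [cnt]; omega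

lemma cnt_map (P : α → Prop) (f : β → α) (l : List β) :
    cnt P (l.map f) = cnt (fun b => P (f b)) l := by
  induction l with
  | nil => rfl
  | cons a l ih => simp [cnt, ih]

lemma cnt_true_eq_length (l : List α) : cnt (fun _ => True) l = l.length := by
  induction l with
  | nil => rfl
  | cons a l ih => simp [cnt, ih]; omega

lemma cnt_eq_card {l : List α} (h : l.Nodup) (P : α → Prop) :
    cnt P l = (l.toFinset.filter P).card := by
  induction l with
  | nil => simp [cnt]
  | cons a l ih =>
    rcases List.nodup_cons.mp h with ⟨ha, hl⟩
    rw [cnt_cons, ih hl, List.toFinset_cons, Finset.filter_insert]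
    by_cases hp : P a <;> simp [hp]
    rw [Finset.card_insert_of_notMem (by simp [ha])]
    omega

lemma cnt_congr {l₁ l₂ : List α} (h₁ : l₁.Nodup) (h₂ : l₂.Nodup)
    (hm : ∀ x, x ∈ l₁ ↔ x ∈ l₂) (P : α → Prop) : cnt P l₁ = cnt P l₂ := by
  rw [cnt_eq_card h₁, cnt_eq_card h₂]
  congr 1
  ext x
  simp [hm x]

lemma cnt_le_of_nodup_subset {l₁ l₂ : List α} (h₁ : l₁.Nodup) (h₂ : l₂.Nodup)
    (hs : l₁ ⊆ l₂) (P : α → Prop) : cnt P l₁ ≤ cnt P l₂ := by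
  rw [cnt_eq_card h₁, cnt_eq_card h₂]
  apply Finset.card_le_card
  intro x hx
  simp only [Finset.mem_filter, List.mem_toFinset] at hx ⊢
  exact ⟨hs hx.1, hx.2⟩

end AugAux

end AugAux

namespace Multigraph
namespace Walk

open AugAux

variable {G : Multigraph}

/-- The darts of a walk: each edge together with its direction of traversal. -/
def darts : {a b : G.V} → G.Walk a b → List (G.E × G.V × G.V)
  | _, _, .nil _ => []
  | _, _, .cons u v _ e _ p => (e, u, v) :: p.darts

@[simp] lemma darts_nil (a : G.V) : (Walk.nil (G := G) a).darts = [] := rfl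

@[simp] lemma darts_cons (u v w : G.V) (e : G.E) (he : G.ends e = s(u, v))
    (p : G.Walk v w) : (Walk.cons u v w e he p).darts = (e, u, v) :: p.darts := rfl

@[simp] lemma support_nil (a : G.V) : (Walk.nil (G := G) a).support = [a] := rfl

@[simp] lemma support_cons (u v w : G.V) (e : G.E) (he : G.ends e = s(u, v))
    (p : G.Walk v w) : (Walk.cons u v w e he p).support = u :: p.support := rfl

@[simp] lemma edges_nil (a : G.V) : (Walk.nil (G := G) a).edges = [] := rfl

@[simp] lemma edges_cons (u v w : G.V) (e : G.E) (he : G.ends e = s(u, v))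
    (p : G.Walk v w) : (Walk.cons u v w e he p).edges = e :: p.edges := rfl

lemma edges_eq_darts_map {a b : G.V} (p : G.Walk a b) :
    p.edges = p.darts.map Prod.fst := by
  induction p with
  | nil => rfl
  | cons u v w e he p ih => simp [ih]

lemma darts_valid {a b : G.V} (p : G.Walk a b) :
    ∀ d ∈ p.darts, G.ends d.1 = s(d.2.1, d.2.2) := by
  induction p with
  | nil => simp
  | cons u v w e he p ih =>
    intro d hd
    rcases List.mem_cons.mp hd with rfl | hd
    · exact he
    · exact ih d hd

lemma start_mem_support {a b : G.V} (p : G.Walk a b) : a ∈ p.support := by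
  induction p with
  | nil => simp
  | cons u v w e he p ih => simp

lemma end_mem_support {a b : G.V} (p : G.Walk a b) : b ∈ p.support := by
  induction p with
  | nil => simp
  | cons u v w e he p ih => simp [ih]

lemma dart_src_mem_support {a b : G.V} (p : G.Walk a b) :
    ∀ d ∈ p.darts, d.2.1 ∈ p.support := by
  induction p with
  | nil => simp
  | cons u v w e he p ih =>
    intro d hd
    rcases List.mem_cons.mp hd with rfl | hd
    · simp
    · simp [ih d hd]

lemma dart_tgt_mem_support {a b : G.V} (p : G.Walk a b) :
    ∀ d ∈ p.darts, d.2.2 ∈ p.support := by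
  induction p with
  | nil => simp
  | cons u v w e he p ih =>
    intro d hd
    rcases List.mem_cons.mp hd with rfl | hd
    · simp [start_mem_support]
    · simp [ih d hd]

lemma dart_src_ne_end {a b : G.V} (p : G.Walk a b) (hp : p.support.Nodup) :
    ∀ d ∈ p.darts, d.2.1 ≠ b := by
  induction p with
  | nil => simp
  | cons u v w e he p ih =>
    rcases List.nodup_cons.mp (by simpa using hp) with ⟨hu, hnd⟩
    intro d hd
    rcases List.mem_cons.mp hd with rfl | hd
    · exact fun h => hu (h ▸ end_mem_support p)
    · exact ih hnd d hd

lemma dart_tgt_ne_start {a b : G.V} (p : G.Walk a b) (hp : p.support.Nodup) :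
    ∀ d ∈ p.darts, d.2.2 ≠ a := by
  induction p with
  | nil => simp
  | cons u v w e he p ih =>
    rcases List.nodup_cons.mp (by simpa using hp) with ⟨hu, hnd⟩
    intro d hd
    rcases List.mem_cons.mp hd with rfl | hd
    · exact fun h => hu (h ▸ start_mem_support p)
    · exact fun h => hu (by rw [← h]; exact dart_tgt_mem_support p d hd)

lemma edges_nodup_of_isPath {a b : G.V} (p : G.Walk a b) (hp : p.IsPath) :
    p.edges.Nodup := by
  induction p with
  | nil => simp
  | cons u v w e he p ih =>
    rcases List.nodup_cons.mp (by simpa [IsPath] using hp) with ⟨hu, hnd⟩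
    rw [edges_cons, List.nodup_cons]
    refine ⟨?_, ih hnd⟩
    intro hmem
    rw [edges_eq_darts_map] at hmem
    rcases List.mem_map.mp hmem with ⟨d, hd, hfst⟩
    have hval := darts_valid p d hd
    rw [hfst, he] at hval
    rcases Sym2.eq_iff.mp hval.symm with ⟨h1, h2⟩ | ⟨h1, h2⟩
    · exact hu (by rw [← h1]; exact dart_src_mem_support p d hd)
    · exact hu (by rw [← h2]; exact dart_tgt_mem_support p d hd)

/-- Telescoping balance of a walk's darts. -/
lemma cnt_balance {a b : G.V} (p : G.Walk a b) (u : G.V) :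
    cnt (fun d => d.2.1 = u) p.darts + (if b = u then 1 else 0)
      = cnt (fun d => d.2.2 = u) p.darts + (if a = u then 1 else 0) := by
  induction p with
  | nil => simp
  | cons x y w e he p ih =>
    have e1 : cnt (fun d => d.2.1 = u) ((e, x, y) :: p.darts)
        = (if x = u then 1 else 0) + cnt (fun d => d.2.1 = u) p.darts := rfl
    have e2 : cnt (fun d => d.2.2 = u) ((e, x, y) :: p.darts)
        = (if y = u then 1 else 0) + cnt (fun d => d.2.2 = u) p.darts := rfl
    rw [darts_cons, e1, e2]
    split_ifs at ih ⊢ <;> omega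

lemma exists_concat {a b : G.V} (p : G.Walk a b) :
    ∀ (e : G.E) (c : G.V), G.ends e = s(b, c) →
    ∃ q : G.Walk a c, q.darts = p.darts ++ [(e, b, c)] ∧
      q.support = p.support ++ [c] := by
  induction p with
  | nil a =>
    intro e c he
    exact ⟨Walk.cons a c c e he (Walk.nil c), by simp, by simp⟩
  | cons x y w e' he' p ih =>
    intro e c he
    obtain ⟨q, hd, hs⟩ := ih e c he
    exact ⟨Walk.cons x y c e' he' q, by simp [hd], by simp [hs]⟩

lemma exists_dropUntil {a b : G.V} (p : G.Walk a b) (u : G.V)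
    (hu : u ∈ p.support) :
    ∃ q : G.Walk u b, List.Sublist q.darts p.darts ∧
      q.support.IsSuffix p.support := by
  induction p with
  | nil a =>
    rw [support_nil, List.mem_singleton] at hu
    subst hu
    exact ⟨Walk.nil u, by simp, by simp⟩
  | cons x y w e he p ih =>
    by_cases hm : u ∈ p.support
    · obtain ⟨q, hd, hs⟩ := ih hm
      exact ⟨q, hd.trans (List.sublist_cons_self _ _),
        hs.trans (List.suffix_cons _ _)⟩
    · have : u = x := by
        rcases List.mem_cons.mp (by simpa using hu) with h | h
        · exact h
        · exact absurd h hm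
      subst this
      exact ⟨Walk.cons u y w e he p, List.Sublist.refl _, List.suffix_refl _⟩

lemma exists_bypass {a b : G.V} (p : G.Walk a b) :
    ∃ q : G.Walk a b, q.IsPath ∧ List.Sublist q.darts p.darts ∧
      ∀ x ∈ q.support, x ∈ p.support := by
  induction p with
  | nil a => exact ⟨Walk.nil a, by simp [IsPath], by simp, by simp⟩
  | cons x y w e he p ih =>
    obtain ⟨q, hq, hd, hs⟩ := ih
    by_cases hm : x ∈ q.support
    · obtain ⟨r, hrd, hrs⟩ := exists_dropUntil q x hm
      refine ⟨r, ?_, (hrd.trans hd).trans (List.sublist_cons_self _ _), ?_⟩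
      · exact List.Nodup.sublist hrs.sublist hq
      · intro z hz
        simp only [support_cons, List.mem_cons]
        exact Or.inr (hs z (hrs.sublist.mem hz))
    · refine ⟨Walk.cons x y w e he q, ?_, ?_, ?_⟩
      · simpa [IsPath] using ⟨hm, hq⟩
      · simpa using hd.cons₂ (e, x, y)
      · intro z hz
        rcases List.mem_cons.mp (by simpa using hz) with rfl | hz
        · simp
        · simp [hs z hz]

lemma exists_crossing_dart {a b : G.V} (p : G.Walk a b) (X : G.V → Prop) :
    X a → ¬ X b →
    ∃ d ∈ p.darts, X d.2.1 ∧ ¬ X d.2.2 := by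
  induction p with
  | nil a => exact fun ha hb => absurd ha hb
  | cons x y w e he p ih =>
    intro ha hb
    by_cases hy : X y
    · obtain ⟨d, hd, h1, h2⟩ := ih hy hb
      exact ⟨d, List.mem_cons_of_mem _ hd, h1, h2⟩
    · exact ⟨(e, x, y), List.mem_cons_self, ha, hy⟩

lemma cnt_crossing_le_one {a b : G.V} (p : G.Walk a b) (X : G.V → Prop)
    (hcl : ∀ d ∈ p.darts, X d.2.2 → X d.2.1) :
    cnt (fun d => X d.2.1 ∧ ¬ X d.2.2) p.darts ≤ if X a then 1 else 0 := by
  induction p with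
  | nil => simp
  | cons x y w e he p ih =>
    have hcl' : ∀ d ∈ p.darts, X d.2.2 → X d.2.1 :=
      fun d hd => hcl d (List.mem_cons_of_mem _ hd)
    have ihp := ih hcl'
    simp only [darts_cons, cnt_cons]
    by_cases hx : X x <;> by_cases hy : X y
    · simp only [if_pos hy] at ihp
      simp only [if_pos hx]
      have : ¬ (X x ∧ ¬ X y) := fun h => h.2 hy
      rw [if_neg this]
      omega
    · simp only [if_neg hy] at ihp
      simp only [if_pos hx]
      rw [if_pos ⟨hx, hy⟩]
      omega
    · exact absurd (hcl (e, x, y) (List.mem_cons_self) hy) hx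
    · simp only [if_neg hy] at ihp
      simp only [if_neg hx]
      have : ¬ (X x ∧ ¬ X y) := fun h => hx h.1
      rw [if_neg this]
      omega

end Walk
end Multigraph

namespace AugAux

open Multigraph Multigraph.Walk

variable {G : Multigraph}

/-- Out-degree of a vertex with respect to a list of darts. -/
noncomputable def outd (L : List (G.E × G.V × G.V)) (u : G.V) : ℕ :=
  cnt (fun d => d.2.1 = u) L

/-- In-degree of a vertex with respect to a list of darts. -/
noncomputable def ind (L : List (G.E × G.V × G.V)) (u : G.V) : ℕ :=
  cnt (fun d => d.2.2 = u) L

lemma eq_singleton_of_nodup {α : Type*} {l : List α} (h : l.Nodup) {a : α}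
    (ha : a ∈ l) (hall : ∀ x ∈ l, x = a) : l = [a] := by
  cases l with
  | nil => cases ha
  | cons b l' =>
    have hb : b = a := hall b (List.mem_cons_self)
    subst hb
    rcases List.nodup_cons.mp h with ⟨hbl, _⟩
    have : l' = [] := by
      rw [List.eq_nil_iff_forall_not_mem]
      intro x hx
      exact hbl ((hall x (List.mem_cons_of_mem _ hx)) ▸ hx)
    rw [this]

lemma erase_cnt {L : List (G.E × G.V × G.V)} (nd : (L.map Prod.fst).Nodup)
    {d₀ : G.E × G.V × G.V} (hd : d₀ ∈ L) (P : (G.E × G.V × G.V) → Prop) :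
    cnt P L = cnt P (fil (fun d => ¬ d.1 = d₀.1) L) + (if P d₀ then 1 else 0) := by
  have hsplit := cnt_fil_split P (fun d => d.1 = d₀.1) L
  have hLnd : L.Nodup := nd.of_map
  have hfe : fil (fun d => d.1 = d₀.1) L = [d₀] := by
    apply eq_singleton_of_nodup ((fil_sublist _ L).nodup hLnd)
    · exact mem_fil.mpr ⟨hd, rfl⟩
    · intro x hx
      rcases mem_fil.mp hx with ⟨hxL, hx1⟩
      exact List.inj_on_of_nodup_map nd hxL hd hx1
  rw [hfe] at hsplit
  simp only [cnt_cons, cnt_nil] at hsplit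
  omega

lemma remove_cnt {L D : List (G.E × G.V × G.V)} (ndL : (L.map Prod.fst).Nodup)
    (ndD : (D.map Prod.fst).Nodup) (hDL : ∀ d ∈ D, d ∈ L)
    (P : (G.E × G.V × G.V) → Prop) :
    cnt P L = cnt P (fil (fun d => ¬ d.1 ∈ D.map Prod.fst) L) + cnt P D := by
  have hsplit := cnt_fil_split P (fun d => d.1 ∈ D.map Prod.fst) L
  have h2 : cnt P (fil (fun d => d.1 ∈ D.map Prod.fst) L) = cnt P D := by
    apply cnt_congr ((fil_sublist _ L).nodup ndL.of_map) ndD.of_map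
    intro x
    constructor
    · intro hx
      rcases mem_fil.mp hx with ⟨hxL, hx1⟩
      rcases List.mem_map.mp hx1 with ⟨d', hd', hfst⟩
      exact (List.inj_on_of_nodup_map ndL hxL (hDL d' hd') hfst.symm) ▸ hd'
    · intro hx
      exact mem_fil.mpr ⟨hDL x hx, List.mem_map_of_mem hx⟩
  omega

/-- Extraction of a trail from `v` to a demanded vertex `τ ∉ T`. -/
lemma exists_trail (v : G.V) (T : Set G.V) (hv : v ∉ T) :
    ∀ (n : ℕ) (L : List (G.E × G.V × G.V)) (τ : G.V), L.length ≤ n →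
    (∀ d ∈ L, G.ends d.1 = s(d.2.1, d.2.2)) →
    (L.map Prod.fst).Nodup →
    (∀ d ∈ L, d.2.1 ∉ T) →
    ind L v = 0 →
    τ ∉ T →
    (τ ≠ v → ind L τ = outd L τ + 1) →
    (∀ u, u ∉ T → u ≠ v → u ≠ τ → outd L u = ind L u) →
    ∃ W : G.Walk v τ, (∀ d ∈ W.darts, d ∈ L) ∧ W.edges.Nodup ∧
      (∀ x ∈ W.support, x ∉ T) := by
  intro n
  induction n with
  | zero =>
    intro L τ hlen _ _ _ _ hτT hdem _
    have hLnil : L = [] := List.length_eq_zero_iff.mp (Nat.le_zero.mp hlen)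
    subst hLnil
    have hτv : τ = v := by
      by_contra hne
      have := hdem hne
      simp [ind, outd, cnt] at this
    subst hτv
    exact ⟨Walk.nil τ, by simp, by simp, by simpa using hτT⟩
  | succ n IH =>
    intro L τ hlen hval hnd hsrcT hiv hτT hdem hbal
    by_cases hτv : τ = v
    · subst hτv
      exact ⟨Walk.nil τ, by simp, by simp, by simpa using hτT⟩
    · have hpos : 1 ≤ ind L τ := by
        have := hdem hτv; omega
      rcases cnt_pos_iff.mp hpos with ⟨d₀, hd₀, hτeq⟩
      set L' := fil (fun d => ¬ d.1 = d₀.1) L with hL'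
      have hEo : ∀ u, outd L u = outd L' u + (if d₀.2.1 = u then 1 else 0) :=
        fun u => erase_cnt hnd hd₀ _
      have hEi : ∀ u, ind L u = ind L' u + (if d₀.2.2 = u then 1 else 0) :=
        fun u => erase_cnt hnd hd₀ _
      have hElen : L.length = L'.length + 1 := by
        have := erase_cnt hnd hd₀ (fun _ => True)
        simp only [cnt_true_eq_length, if_pos trivial] at this
        exact this
      have hxT : d₀.2.1 ∉ T := hsrcT d₀ hd₀
      have hsub : ∀ d ∈ L', d ∈ L := fun d hd => (mem_fil.mp hd).1
      have hnd' : (L'.map Prod.fst).Nodup := ((fil_sublist _ L).map _).nodup hnd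
      obtain ⟨W', hW'sub, hW'nd, hW'T⟩ :=
        IH L' d₀.2.1 (by omega)
          (fun d hd => hval d (hsub d hd)) hnd'
          (fun d hd => hsrcT d (hsub d hd))
          (by have := hEi v
              have h0 : ind L' v ≤ ind L v := by omega
              omega)
          hxT
          (by intro hxv
              have ho := hEo d₀.2.1
              have hi := hEi d₀.2.1
              rw [if_pos rfl] at ho
              by_cases hxτ : d₀.2.2 = d₀.2.1
              · rw [if_pos hxτ] at hi
                have : d₀.2.2 = τ := hτeq
                have hττ : τ = d₀.2.1 := by rw [← this, hxτ]
                have := hdem hτv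
                rw [hττ] at this
                omega
              · rw [if_neg hxτ] at hi
                have hxne : d₀.2.1 ≠ τ := fun h => hxτ (by rw [hτeq, h])
                have := hbal d₀.2.1 hxT hxv hxne
                omega)
          (by intro u huT huv hux
              have ho := hEo u
              have hi := hEi u
              rw [if_neg (fun h => hux h.symm)] at ho
              by_cases huτ : d₀.2.2 = u
              · rw [if_pos huτ] at hi
                have hτu : τ = u := by rw [← hτeq, huτ]
                have := hdem hτv
                rw [hτu] at this
                omega
              · rw [if_neg huτ] at hi
                have huτ' : u ≠ τ := fun h => huτ (by rw [hτeq, h])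
                have := hbal u huT huv huτ'
                omega)
      have he' : G.ends d₀.1 = s(d₀.2.1, τ) := by
        rw [← hτeq]; exact hval d₀ hd₀
      obtain ⟨W, hWd, hWs⟩ := exists_concat W' d₀.1 τ he'
      refine ⟨W, ?_, ?_, ?_⟩
      · intro d hd
        rw [hWd] at hd
        rcases List.mem_append.mp hd with hd | hd
        · exact hsub d (hW'sub d hd)
        · rw [List.mem_singleton] at hd
          subst hd
          have : (d₀.1, d₀.2.1, τ) = d₀ := by
            rw [← hτeq]
          rw [this]
          exact hd₀
      · rw [edges_eq_darts_map, hWd, List.map_append, List.nodup_append]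
        refine ⟨by rw [← edges_eq_darts_map]; exact hW'nd, by simp, ?_⟩
        intro x hx y hy hxy
        simp only [List.map_cons, List.map_nil, List.mem_singleton] at hy
        subst hy
        subst hxy
        rcases List.mem_map.mp hx with ⟨d, hd, hfst⟩
        have := (mem_fil.mp (hW'sub d hd)).2
        exact this hfst
      · intro x hx
        rw [hWs] at hx
        rcases List.mem_append.mp hx with hx | hx
        · exact hW'T x hx
        · rw [List.mem_singleton] at hx
          subst hx
          exact hτT

/-- Extraction of a trail from `v` to a prescribed vertex `t ∈ T`. -/
lemma exists_extraction (v : G.V) (T : Set G.V) (hv : v ∉ T)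
    (L : List (G.E × G.V × G.V))
    (hval : ∀ d ∈ L, G.ends d.1 = s(d.2.1, d.2.2))
    (hnd : (L.map Prod.fst).Nodup)
    (hsrcT : ∀ d ∈ L, d.2.1 ∉ T)
    (hiv : ind L v = 0)
    (hcons : ∀ u, u ∉ T → u ≠ v → outd L u = ind L u)
    (t : G.V) (htT : t ∈ T) (hind : 1 ≤ ind L t) :
    ∃ W : G.Walk v t, (∀ d ∈ W.darts, d ∈ L) ∧ W.edges.Nodup ∧
      (∀ x ∈ W.support, x ∈ T → x = t) := by
  rcases cnt_pos_iff.mp hind with ⟨d₀, hd₀, hτeq⟩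
  set L' := fil (fun d => ¬ d.1 = d₀.1) L with hL'
  have hEo : ∀ u, outd L u = outd L' u + (if d₀.2.1 = u then 1 else 0) :=
    fun u => erase_cnt hnd hd₀ _
  have hEi : ∀ u, ind L u = ind L' u + (if d₀.2.2 = u then 1 else 0) :=
    fun u => erase_cnt hnd hd₀ _
  have hxT : d₀.2.1 ∉ T := hsrcT d₀ hd₀
  have hsub : ∀ d ∈ L', d ∈ L := fun d hd => (mem_fil.mp hd).1
  have hnd' : (L'.map Prod.fst).Nodup := ((fil_sublist _ L).map _).nodup hnd
  have htv : t ≠ v := fun h => hv (h ▸ htT)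
  obtain ⟨W', hW'sub, hW'nd, hW'T⟩ :=
    exists_trail v T hv L'.length L' d₀.2.1 le_rfl
      (fun d hd => hval d (hsub d hd)) hnd'
      (fun d hd => hsrcT d (hsub d hd))
      (by have := hEi v
          have hne : d₀.2.2 ≠ v := by rw [hτeq]; exact htv
          rw [if_neg hne] at this
          omega)
      hxT
      (by intro hxv
          have ho := hEo d₀.2.1
          have hi := hEi d₀.2.1
          rw [if_pos rfl] at ho
          have hne : d₀.2.2 ≠ d₀.2.1 := by
            rw [hτeq]; exact fun h => hxT (h ▸ htT)
          rw [if_neg hne] at hi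
          have := hcons d₀.2.1 hxT hxv
          omega)
      (by intro u huT huv hux
          have ho := hEo u
          have hi := hEi u
          rw [if_neg (fun h => hux h.symm)] at ho
          have hne : d₀.2.2 ≠ u := by rw [hτeq]; exact fun h => huT (h ▸ htT)
          rw [if_neg hne] at hi
          have := hcons u huT huv
          omega)
  have he' : G.ends d₀.1 = s(d₀.2.1, t) := by
    rw [← hτeq]; exact hval d₀ hd₀
  obtain ⟨W, hWd, hWs⟩ := exists_concat W' d₀.1 t he'
  refine ⟨W, ?_, ?_, ?_⟩
  · intro d hd
    rw [hWd] at hd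
    rcases List.mem_append.mp hd with hd | hd
    · exact hsub d (hW'sub d hd)
    · rw [List.mem_singleton] at hd
      subst hd
      have : (d₀.1, d₀.2.1, t) = d₀ := by rw [← hτeq]
      rw [this]
      exact hd₀
  · rw [edges_eq_darts_map, hWd, List.map_append, List.nodup_append]
    refine ⟨by rw [← edges_eq_darts_map]; exact hW'nd, by simp, ?_⟩
    intro x hx y hy hxy
    simp only [List.map_cons, List.map_nil, List.mem_singleton] at hy
    subst hy
    subst hxy
    rcases List.mem_map.mp hx with ⟨d, hd, hfst⟩
    exact (mem_fil.mp (hW'sub d hd)).2 hfst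
  · intro x hx
    rw [hWs] at hx
    rcases List.mem_append.mp hx with hx | hx
    · exact fun _ => absurd hx (by intro h; exact hW'T x hx ‹x ∈ T›)
    · rw [List.mem_singleton] at hx
      exact fun _ => hx

end AugAux

namespace AugAux

open Multigraph Multigraph.Walk

variable {G : Multigraph}

/-- The invariant maintained by the path-extraction process. -/
def Good (v : G.V) (T : Set G.V) (L : List (G.E × G.V × G.V)) : Prop :=
  (∀ d ∈ L, G.ends d.1 = s(d.2.1, d.2.2)) ∧
  (L.map Prod.fst).Nodup ∧
  (∀ d ∈ L, d.2.1 ∉ T) ∧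
  ind L v = 0 ∧
  (∀ u, u ∉ T → u ≠ v → outd L u = ind L u)

lemma step_lemma {v : G.V} {T : Set G.V} (hv : v ∉ T)
    {L : List (G.E × G.V × G.V)} (hG : Good v T L)
    {t : G.V} (htT : t ∈ T) (hind : 1 ≤ ind L t) :
    ∃ (W : G.Walk v t) (L' : List (G.E × G.V × G.V)),
      (∀ d ∈ W.darts, d ∈ L) ∧ W.edges.Nodup ∧
      (∀ x ∈ W.support, x ∈ T → x = t) ∧
      Good v T L' ∧
      (∀ d ∈ L', d ∈ L) ∧
      (∀ d ∈ L', ¬ d.1 ∈ W.edges) ∧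
      outd L v = outd L' v + 1 ∧
      (∀ u ∈ T, u ≠ t → ind L' u = ind L u) := by
  obtain ⟨hval, hnd, hsrcT, hiv, hcons⟩ := hG
  obtain ⟨W, hWsub, hWnd, hWT⟩ :=
    exists_extraction v T hv L hval hnd hsrcT hiv hcons t htT hind
  have ndD : (W.darts.map Prod.fst).Nodup := by
    rw [← edges_eq_darts_map]; exact hWnd
  set L' := fil (fun d => ¬ d.1 ∈ W.darts.map Prod.fst) L with hL'
  have hR : ∀ P : (G.E × G.V × G.V) → Prop,
      cnt P L = cnt P L' + cnt P W.darts := fun P => remove_cnt hnd ndD hWsub P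
  have hsub' : ∀ d ∈ L', d ∈ L := fun d hd => (mem_fil.mp hd).1
  have hnd' : (L'.map Prod.fst).Nodup := ((fil_sublist _ L).map _).nodup hnd
  have htv : t ≠ v := fun h => hv (h ▸ htT)
  have hWiv : ind W.darts v = 0 := by
    have hle : ind W.darts v ≤ ind L v :=
      cnt_le_of_nodup_subset ndD.of_map hnd.of_map hWsub _
    omega
  have hWov : outd W.darts v = 1 := by
    have h := cnt_balance W v
    rw [if_neg htv, if_pos rfl] at h
    have h2 : cnt (fun d => d.2.2 = v) W.darts = 0 := hWiv
    show cnt (fun d => d.2.1 = v) W.darts = 1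
    omega
  have hWinT : ∀ u ∈ T, u ≠ t → ind W.darts u = 0 := by
    intro u huT hut
    apply cnt_eq_zero_iff.mpr
    intro d hd hdu
    exact hut (by rw [← hdu]; exact hWT _ (dart_tgt_mem_support W d hd) (hdu ▸ huT))
  refine ⟨W, L', hWsub, hWnd, hWT, ⟨?_, hnd', ?_, ?_, ?_⟩, hsub', ?_, ?_, ?_⟩
  · exact fun d hd => hval d (hsub' d hd)
  · exact fun d hd => hsrcT d (hsub' d hd)
  · have := hR (fun d => d.2.2 = v)
    unfold ind at hiv ⊢
    unfold ind at hWiv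
    omega
  · intro u huT huv
    have ho := hR (fun d => d.2.1 = u)
    have hi := hR (fun d => d.2.2 = u)
    have hbalW := cnt_balance W u
    rw [if_neg (fun h : t = u => huT (h ▸ htT)),
        if_neg (fun h : v = u => huv h.symm)] at hbalW
    have := hcons u huT huv
    unfold outd ind at *
    omega
  · intro d hd
    have := (mem_fil.mp hd).2
    rw [edges_eq_darts_map]
    exact this
  · have := hR (fun d => d.2.1 = v)
    unfold outd at *
    omega
  · intro u huT hut
    have := hR (fun d => d.2.2 = u)
    have := hWinT u huT hut
    unfold ind at *
    omega

lemma sum_outd_eq [Fintype G.V] (L : List (G.E × G.V × G.V)) :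
    ∑ u : G.V, outd L u = L.length := by
  induction L with
  | nil => simp [outd, cnt]
  | cons d L ih =>
    have : ∀ u, outd (d :: L) u = (if d.2.1 = u then 1 else 0) + outd L u :=
      fun u => rfl
    simp only [this]
    rw [Finset.sum_add_distrib, ih, Finset.sum_ite_eq Finset.univ d.2.1
      (fun _ => 1)]
    simp
    omega

lemma sum_ind_eq [Fintype G.V] (L : List (G.E × G.V × G.V)) :
    ∑ u : G.V, ind L u = L.length := by
  induction L with
  | nil => simp [ind, cnt]
  | cons d L ih =>
    have : ∀ u, ind (d :: L) u = (if d.2.2 = u then 1 else 0) + ind L u :=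
      fun u => rfl
    simp only [this]
    rw [Finset.sum_add_distrib, ih, Finset.sum_ite_eq Finset.univ d.2.2
      (fun _ => 1)]
    simp
    omega

lemma exists_sink [Fintype G.V] {v : G.V} {T : Set G.V} (hv : v ∉ T)
    {L : List (G.E × G.V × G.V)} (hG : Good v T L) (hov : 1 ≤ outd L v) :
    ∃ w, w ∈ T ∧ 1 ≤ ind L w := by
  by_contra hno
  push_neg at hno
  obtain ⟨hval, hnd, hsrcT, hiv, hcons⟩ := hG
  have hindT : ∀ u, u ∈ T → ind L u = 0 := by
    intro u hu
    have := hno u hu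
    omega
  have houtT : ∀ u, u ∈ T → outd L u = 0 := by
    intro u hu
    apply cnt_eq_zero_iff.mpr
    intro d hd hdu
    exact hsrcT d hd (hdu ▸ hu)
  have hsum : ∑ u : G.V, outd L u = ∑ u : G.V, ind L u := by
    rw [sum_outd_eq, sum_ind_eq]
  have hsplit : ∀ f : G.V → ℕ, ∑ u : G.V, f u =
      (∑ u ∈ Finset.univ.filter (fun u => u ∈ T), f u) +
      (∑ u ∈ Finset.univ.filter (fun u => ¬ u ∈ T), f u) :=
    fun f => (Finset.sum_filter_add_sum_filter_not _ _ _).symm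
  set S := Finset.univ.filter (fun u => ¬ u ∈ T) with hS
  have hvS : v ∈ S := by simp [hS, hv]
  have houtS : ∑ u ∈ S, outd L u = outd L v + ∑ u ∈ S.erase v, outd L u :=
    (Finset.add_sum_erase S _ hvS).symm
  have hinS : ∑ u ∈ S, ind L u = ind L v + ∑ u ∈ S.erase v, ind L u :=
    (Finset.add_sum_erase S _ hvS).symm
  have herase : ∑ u ∈ S.erase v, outd L u = ∑ u ∈ S.erase v, ind L u := by
    apply Finset.sum_congr rfl
    intro u hu
    have h1 : u ≠ v := Finset.ne_of_mem_erase hu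
    have h2 : u ∉ T := by
      have := Finset.mem_of_mem_erase hu
      simp [hS] at this
      exact this
    exact hcons u h2 h1
  have hTz1 : ∑ u ∈ Finset.univ.filter (fun u => u ∈ T), outd L u = 0 :=
    Finset.sum_eq_zero (fun u hu => houtT u (by simpa using hu))
  have hTz2 : ∑ u ∈ Finset.univ.filter (fun u => u ∈ T), ind L u = 0 :=
    Finset.sum_eq_zero (fun u hu => hindT u (by simpa using hu))
  rw [hsplit (outd L), hsplit (ind L), hTz1, hTz2, houtS, hinS, herase, hiv]
    at hsum
  omega

end AugAux

/-- the augmenting-path fact. Let `v` be a vertex of a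
graph `G` and `T ⊆ V(G)` with `v ∉ T`.  If there are four pairwise
edge-disjoint paths of `G` from `v` to `T`, each with no internal vertex in
`T`, and three pairwise edge-disjoint paths of `G` from `v` to distinct
vertices `t 0, t 1, t 2 ∈ T`, each with no internal vertex in `T`, then
there are four pairwise edge-disjoint paths `P 0, P 1, P 2, P 3` of `G` from
`v` to `T`, each with no internal vertex in `T`, such that `P 0, P 1, P 2`
have final vertices `t 0, t 1, t 2` respectively. -/
theorem four_edge_disjoint_paths_with_prescribed_ends
    (G : Multigraph) [Fintype G.V] [Fintype G.E] (v : G.V) (T : Set G.V)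
    (hv : v ∉ T)
    (h4 : ∃ (w : Fin 4 → G.V) (P : (i : Fin 4) → G.Walk v (w i)),
      (∀ i, w i ∈ T) ∧ (∀ i, (P i).IsPath) ∧
      (∀ i, ∀ x ∈ (P i).support, x ∈ T → x = w i) ∧
      (∀ i j, i ≠ j → ∀ e ∈ (P i).edges, e ∉ (P j).edges))
    (t : Fin 3 → G.V) (ht : ∀ i, t i ∈ T) (htinj : Function.Injective t)
    (h3 : ∃ Q : (i : Fin 3) → G.Walk v (t i),
      (∀ i, (Q i).IsPath) ∧
      (∀ i, ∀ x ∈ (Q i).support, x ∈ T → x = t i) ∧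
      (∀ i j, i ≠ j → ∀ e ∈ (Q i).edges, e ∉ (Q j).edges)) :
    ∃ (w : Fin 4 → G.V) (P : (i : Fin 4) → G.Walk v (w i)),
      (∀ i, w i ∈ T) ∧ (∀ i, (P i).IsPath) ∧
      (∀ i : Fin 3, w i.castSucc = t i) ∧
      (∀ i, ∀ x ∈ (P i).support, x ∈ T → x = w i) ∧
      (∀ i j, i ≠ j → ∀ e ∈ (P i).edges, e ∉ (P j).edges) := by
  classical
  obtain ⟨w4, P4, hw4T, hP4path, hP4int, hP4disj⟩ := h4
  obtain ⟨Q, hQpath, hQint, hQdisj⟩ := h3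
  open AugAux Multigraph.Walk in
  -- basic facts about the walks `Q i`
  have hbal : ∀ {a b : G.V} (W : G.Walk a b) (u : G.V),
      outd W.darts u + (if b = u then 1 else 0)
        = ind W.darts u + (if a = u then 1 else 0) :=
    fun W u => cnt_balance W u
  have htv : ∀ i : Fin 3, t i ≠ v := fun i h => hv (h ▸ ht i)
  have hQiv : ∀ i : Fin 3, ind (Q i).darts v = 0 := by
    intro i
    exact cnt_eq_zero_iff.mpr
      (fun d hd hdv => dart_tgt_ne_start (Q i) (hQpath i) d hd hdv)
  have hQov : ∀ i : Fin 3, outd (Q i).darts v = 1 := by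
    intro i
    have h := hbal (Q i) v
    rw [if_neg (htv i), if_pos rfl] at h
    have h2 := hQiv i
    omega
  have hQit : ∀ i : Fin 3, 1 ≤ ind (Q i).darts (t i) := by
    intro i
    have h := hbal (Q i) (t i)
    rw [if_pos rfl, if_neg (fun hh : v = t i => htv i hh.symm)] at h
    omega
  have hQsrcT : ∀ (i : Fin 3), ∀ d ∈ (Q i).darts, d.2.1 ∉ T := by
    intro i d hd hT
    exact dart_src_ne_end (Q i) (hQpath i) d hd
      (hQint i _ (dart_src_mem_support _ d hd) hT)
  have hQcons : ∀ (i : Fin 3) (u : G.V), u ∉ T → u ≠ v →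
      outd (Q i).darts u = ind (Q i).darts u := by
    intro i u huT huv
    have h := hbal (Q i) u
    rw [if_neg (fun hh : t i = u => huT (hh ▸ ht i)),
        if_neg (fun hh : v = u => huv hh.symm)] at h
    omega
  -- the dart list of the system Q
  set L3 : List (G.E × G.V × G.V) :=
    (Q 0).darts ++ ((Q 1).darts ++ (Q 2).darts) with hL3
  have hmem3 : ∀ d, d ∈ L3 ↔ d ∈ (Q 0).darts ∨ d ∈ (Q 1).darts ∨ d ∈ (Q 2).darts := by
    intro d
    simp [hL3, List.mem_append]
  have hval3 : ∀ d ∈ L3, G.ends d.1 = s(d.2.1, d.2.2) := by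
    intro d hd
    rcases (hmem3 d).mp hd with h | h | h
    · exact darts_valid _ d h
    · exact darts_valid _ d h
    · exact darts_valid _ d h
  have hnd3 : (L3.map Prod.fst).Nodup := by
    rw [hL3, List.map_append, List.map_append]
    rw [← edges_eq_darts_map, ← edges_eq_darts_map, ← edges_eq_darts_map]
    rw [List.nodup_append, List.nodup_append]
    refine ⟨edges_nodup_of_isPath _ (hQpath 0),
      ⟨edges_nodup_of_isPath _ (hQpath 1), edges_nodup_of_isPath _ (hQpath 2), ?_⟩, ?_⟩
    · intro e he1 e' he2 hee
      rw [← hee] at he2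
      exact hQdisj 1 2 (by decide) e he1 he2
    · intro e he0 e' he12 hee
      rw [← hee] at he12
      rcases List.mem_append.mp he12 with h | h
      · exact hQdisj 0 1 (by decide) e he0 h
      · exact hQdisj 0 2 (by decide) e he0 h
  have hsrcT3 : ∀ d ∈ L3, d.2.1 ∉ T := by
    intro d hd
    rcases (hmem3 d).mp hd with h | h | h
    · exact hQsrcT 0 d h
    · exact hQsrcT 1 d h
    · exact hQsrcT 2 d h
  have hiv3 : ind L3 v = 0 := by
    have : ind L3 v = ind (Q 0).darts v + (ind (Q 1).darts v + ind (Q 2).darts v) := by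
      rw [hL3]
      show cnt _ _ = _
      rw [cnt_append, cnt_append]
      rfl
    rw [this, hQiv 0, hQiv 1, hQiv 2]
  have hsplit3 : ∀ P : (G.E × G.V × G.V) → Prop,
      cnt P L3 = cnt P (Q 0).darts + (cnt P (Q 1).darts + cnt P (Q 2).darts) := by
    intro P
    rw [hL3, cnt_append, cnt_append]
  have hcons3 : ∀ u, u ∉ T → u ≠ v → outd L3 u = ind L3 u := by
    intro u huT huv
    have h0 := hQcons 0 u huT huv
    have h1 := hQcons 1 u huT huv
    have h2 := hQcons 2 u huT huv
    have ho := hsplit3 (fun d => d.2.1 = u)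
    have hi := hsplit3 (fun d => d.2.2 = u)
    show cnt _ _ = cnt _ _
    unfold outd ind at h0 h1 h2
    omega
  have hov3 : outd L3 v = 3 := by
    have ho := hsplit3 (fun d => d.2.1 = v)
    have h0 := hQov 0
    have h1 := hQov 1
    have h2 := hQov 2
    show cnt _ _ = 3
    unfold outd at h0 h1 h2
    omega
  have hit3 : ∀ i : Fin 3, 1 ≤ ind L3 (t i) := by
    intro i
    have hi := hsplit3 (fun d => d.2.2 = t i)
    have h := hQit i
    unfold ind at h ⊢
    have : cnt (fun d => d.2.2 = t i) (Q i).darts ≤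
        cnt (fun d => d.2.2 = t i) (Q 0).darts +
        (cnt (fun d => d.2.2 = t i) (Q 1).darts +
          cnt (fun d => d.2.2 = t i) (Q 2).darts) := by
      have h3 : (i : Fin 3) = 0 ∨ i = 1 ∨ i = 2 := by omega
      rcases h3 with rfl | rfl | rfl <;> omega
    omega
  -- the residual reachability argument
  set resC : (G.E × G.V × G.V) → Prop :=
    fun d => (¬ d.1 ∈ L3.map Prod.fst) ∨ ((d.1, d.2.2, d.2.1) ∈ L3) with hresC
  set Reach : G.V → Prop := fun u => ∃ W : G.Walk v u,
    (∀ x ∈ W.support, x ∉ T) ∧ (∀ d ∈ W.darts, resC d) with hReach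
  have hReachv : Reach v := ⟨Multigraph.Walk.nil v, by simpa using hv, by simp⟩
  have hReachT : ∀ u, Reach u → u ∉ T := by
    rintro u ⟨W, hs, _⟩
    exact hs u (end_mem_support W)
  have hSucc : ∃ t' : G.V, t' ∈ T ∧ ∃ W : G.Walk v t',
      (∀ x ∈ W.support, x ∈ T → x = t') ∧ (∀ d ∈ W.darts, resC d) := by
    by_contra hns
    push_neg at hns
    have hstep : ∀ (a b : G.V) (e : G.E), Reach a → G.ends e = s(a, b) →
        resC (e, a, b) → Reach b := by
      intro a b e hra hends hrc
      obtain ⟨W, hs, hd⟩ := hra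
      obtain ⟨W', hWd, hWs⟩ := exists_concat W e b hends
      have hdall : ∀ d ∈ W'.darts, resC d := by
        intro d hdm
        rw [hWd] at hdm
        rcases List.mem_append.mp hdm with h | h
        · exact hd d h
        · rw [List.mem_singleton] at h
          subst h
          exact hrc
      by_cases hbT : b ∈ T
      · exfalso
        obtain ⟨d, hdm, hdnc⟩ := hns b hbT W' (by
          intro x hx
          rw [hWs] at hx
          rcases List.mem_append.mp hx with h | h
          · exact fun hxT => absurd hxT (hs x h)
          · rw [List.mem_singleton] at h
            exact fun _ => h)
        exact hdnc (hdall d hdm)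
      · refine ⟨W', ?_, hdall⟩
        intro x hx
        rw [hWs] at hx
        rcases List.mem_append.mp hx with h | h
        · exact hs x h
        · rw [List.mem_singleton] at h
          subst h
          exact hbT
    have hQcl : ∀ d ∈ L3, Reach d.2.2 → Reach d.2.1 := by
      intro d hd hr
      have hvald := hval3 d hd
      have hrc : resC (d.1, d.2.2, d.2.1) := Or.inr hd
      exact hstep d.2.2 d.2.1 d.1 hr (by rw [hvald]; exact Sym2.eq_swap) hrc
    have hcross_le : ∀ i : Fin 3,
        cnt (fun d => Reach d.2.1 ∧ ¬ Reach d.2.2) (Q i).darts ≤ 1 := by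
      intro i
      have h := cnt_crossing_le_one (Q i) Reach (by
        intro d hd hr
        apply hQcl d _ hr
        rcases (show (i : Fin 3) = 0 ∨ i = 1 ∨ i = 2 by omega) with rfl | rfl | rfl
        · exact (hmem3 d).mpr (Or.inl hd)
        · exact (hmem3 d).mpr (Or.inr (Or.inl hd))
        · exact (hmem3 d).mpr (Or.inr (Or.inr hd)))
      rw [if_pos hReachv] at h
      exact h
    have hcrossL3 : cnt (fun d => Reach d.2.1 ∧ ¬ Reach d.2.2) L3 ≤ 3 := by
      have h := hsplit3 (fun d => Reach d.2.1 ∧ ¬ Reach d.2.2)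
      have h0 := hcross_le 0
      have h1 := hcross_le 1
      have h2 := hcross_le 2
      omega
    have hdelta : ∀ j : Fin 4, ∃ d, d ∈ (P4 j).darts ∧
        (Reach d.2.1 ∧ ¬ Reach d.2.2) ∧ d ∈ L3 := by
      intro j
      have hwj : ¬ Reach (w4 j) := fun hr => hReachT _ hr (hw4T j)
      obtain ⟨d, hd, h1, h2⟩ := exists_crossing_dart (P4 j) Reach hReachv hwj
      refine ⟨d, hd, ⟨h1, h2⟩, ?_⟩
      by_contra hdL3
      have hrc : resC d := by
        by_cases hE : d.1 ∈ L3.map Prod.fst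
        · rcases List.mem_map.mp hE with ⟨d', hd', hfst⟩
          have hv1 := hval3 d' hd'
          have hv2 := darts_valid (P4 j) d hd
          rw [hfst] at hv1
          rw [hv2] at hv1
          rcases Sym2.eq_iff.mp hv1 with ⟨ha, hb⟩ | ⟨ha, hb⟩
          · exfalso
            apply hdL3
            have : d' = d := by
              have h' : (d'.1, d'.2.1, d'.2.2) = (d.1, d.2.1, d.2.2) := by
                rw [hfst, ha, hb]
              exact h'
            exact this ▸ hd'
          · right
            have h' : (d.1, d.2.2, d.2.1) = (d'.1, d'.2.1, d'.2.2) := by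
              rw [hfst, ha, hb]
            rw [show (d'.1, d'.2.1, d'.2.2) = d' from rfl] at h'
            rw [h']
            exact hd'
        · exact Or.inl hE
      exact h2 (hstep d.2.1 d.2.2 d.1 h1 (darts_valid (P4 j) d hd) hrc)
    obtain ⟨d0, hd0P, hd0c, hd0L⟩ := hdelta 0
    obtain ⟨d1, hd1P, hd1c, hd1L⟩ := hdelta 1
    obtain ⟨d2, hd2P, hd2c, hd2L⟩ := hdelta 2
    obtain ⟨d3, hd3P, hd3c, hd3L⟩ := hdelta 3
    have hedge : ∀ (j : Fin 4) (d : G.E × G.V × G.V), d ∈ (P4 j).darts →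
        d.1 ∈ (P4 j).edges := by
      intro j d hd
      rw [edges_eq_darts_map]
      exact List.mem_map_of_mem hd
    have hne : ∀ (j k : Fin 4) (x y : G.E × G.V × G.V), j ≠ k →
        x ∈ (P4 j).darts → y ∈ (P4 k).darts → x ≠ y := by
      intro j k x y hjk hx hy hxy
      exact hP4disj j k hjk x.1 (hedge j x hx) (hxy ▸ hedge k y hy)
    have hlist : ([d0, d1, d2, d3] : List (G.E × G.V × G.V)).Nodup := by
      have n01 := hne 0 1 d0 d1 (by decide) hd0P hd1P
      have n02 := hne 0 2 d0 d2 (by decide) hd0P hd2P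
      have n03 := hne 0 3 d0 d3 (by decide) hd0P hd3P
      have n12 := hne 1 2 d1 d2 (by decide) hd1P hd2P
      have n13 := hne 1 3 d1 d3 (by decide) hd1P hd3P
      have n23 := hne 2 3 d2 d3 (by decide) hd2P hd3P
      simp [List.nodup_cons, n01, n02, n03, n12, n13, n23]
    have hsubset : ∀ x ∈ ([d0, d1, d2, d3] : List (G.E × G.V × G.V)), x ∈ L3 := by
      intro x hx
      rcases List.mem_cons.mp hx with rfl | hx
      · exact hd0L
      rcases List.mem_cons.mp hx with rfl | hx
      · exact hd1L
      rcases List.mem_cons.mp hx with rfl | hx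
      · exact hd2L
      rw [List.mem_singleton] at hx
      exact hx ▸ hd3L
    have hc4 : cnt (fun d => Reach d.2.1 ∧ ¬ Reach d.2.2)
        ([d0, d1, d2, d3] : List (G.E × G.V × G.V)) = 4 := by
      simp [cnt, hd0c, hd1c, hd2c, hd3c]
    have hle := cnt_le_of_nodup_subset hlist hnd3.of_map hsubset
      (fun d => Reach d.2.1 ∧ ¬ Reach d.2.2)
    rw [hc4] at hle
    omega
  -- extract the augmenting path
  obtain ⟨tstar, htstarT, W0, hW0T, hW0res⟩ := hSucc
  obtain ⟨R, hRpath, hRdsub, hRssub⟩ := exists_bypass W0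
  have hRres : ∀ d ∈ R.darts, resC d := fun d hd => hW0res d (hRdsub.mem hd)
  have hRT : ∀ x ∈ R.support, x ∈ T → x = tstar :=
    fun x hx => hW0T x (hRssub x hx)
  have hRnd : R.edges.Nodup := edges_nodup_of_isPath R hRpath
  have hRndd : (R.darts.map Prod.fst).Nodup := by
    rw [← edges_eq_darts_map]; exact hRnd
  have htsv : tstar ≠ v := fun h => hv (h ▸ htstarT)
  have hRsrcT : ∀ d ∈ R.darts, d.2.1 ∉ T := by
    intro d hd hT
    exact dart_src_ne_end R hRpath d hd
      (hRT _ (dart_src_mem_support _ d hd) hT)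
  have hRiv : ind R.darts v = 0 :=
    cnt_eq_zero_iff.mpr (fun d hd hdv => dart_tgt_ne_start R hRpath d hd hdv)
  have hRov : outd R.darts v = 1 := by
    have h := hbal R v
    rw [if_neg htsv, if_pos rfl] at h
    omega
  -- the augmented dart list L4
  set Drev := fil (fun d => d.1 ∈ L3.map Prod.fst) R.darts with hDrev
  set Dnew := fil (fun d => ¬ d.1 ∈ L3.map Prod.fst) R.darts with hDnew
  set A3 := fil (fun d => d.1 ∈ R.darts.map Prod.fst) L3 with hA3
  set B3 := fil (fun d => ¬ d.1 ∈ R.darts.map Prod.fst) L3 with hB3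
  set L4 := B3 ++ Dnew with hL4
  have hRsplit : ∀ P : (G.E × G.V × G.V) → Prop,
      cnt P Drev + cnt P Dnew = cnt P R.darts :=
    fun P => cnt_fil_split P _ R.darts
  have hAsplit : ∀ P : (G.E × G.V × G.V) → Prop,
      cnt P A3 + cnt P B3 = cnt P L3 :=
    fun P => cnt_fil_split P _ L3
  have hrevL3 : ∀ d ∈ Drev, (d.1, d.2.2, d.2.1) ∈ L3 := by
    intro d hd
    rcases mem_fil.mp hd with ⟨hdR, hdE⟩
    rcases hRres d hdR with h | h
    · exact absurd hdE h
    · exact h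
  have hrevinj : Function.Injective
      (fun d : G.E × G.V × G.V => (d.1, d.2.2, d.2.1)) := by
    intro x y hxy
    have hxy' : (x.1, x.2.2, x.2.1) = (y.1, y.2.2, y.2.1) := hxy
    have h1 := (Prod.mk.inj hxy').1
    have h23 := (Prod.mk.inj hxy').2
    have h2 := (Prod.mk.inj h23).1
    have h3 := (Prod.mk.inj h23).2
    exact Prod.ext h1 (Prod.ext h3 h2)
  have hA3congr : ∀ P : (G.E × G.V × G.V) → Prop,
      cnt P A3 = cnt (fun d => P (d.1, d.2.2, d.2.1)) Drev := by
    intro P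
    have hnodA : A3.Nodup := (fil_sublist _ L3).nodup hnd3.of_map
    have hnodD : Drev.Nodup := (fil_sublist _ R.darts).nodup hRndd.of_map
    have hmem : ∀ x, x ∈ A3 ↔
        x ∈ Drev.map (fun d => (d.1, d.2.2, d.2.1)) := by
      intro x
      constructor
      · intro hx
        rcases mem_fil.mp hx with ⟨hxL3, hxE⟩
        rcases List.mem_map.mp hxE with ⟨dR, hdR, hfst⟩
        have hdRrev : dR ∈ Drev := mem_fil.mpr ⟨hdR,
          hfst ▸ List.mem_map_of_mem hxL3⟩
        have hrev := hrevL3 dR hdRrev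
        have : (dR.1, dR.2.2, dR.2.1) = x :=
          List.inj_on_of_nodup_map hnd3 hrev hxL3 (by rw [hfst])
        rw [← this]
        exact List.mem_map_of_mem hdRrev
      · intro hx
        rcases List.mem_map.mp hx with ⟨dR, hdR, hfst⟩
        apply mem_fil.mpr
        constructor
        · rw [← hfst]
          exact hrevL3 dR hdR
        · have h1 : dR.1 ∈ R.darts.map Prod.fst :=
            List.mem_map_of_mem (mem_fil.mp hdR).1
          have hx1 : x.1 = dR.1 := by rw [← hfst]
          rw [hx1]
          exact h1
    have := cnt_congr hnodA (hnodD.map hrevinj) hmem P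
    rw [this, cnt_map]
  -- facts about L4
  have hval4 : ∀ d ∈ L4, G.ends d.1 = s(d.2.1, d.2.2) := by
    intro d hd
    rcases List.mem_append.mp hd with h | h
    · exact hval3 d (mem_fil.mp h).1
    · exact darts_valid R d (mem_fil.mp h).1
  have hnd4 : (L4.map Prod.fst).Nodup := by
    rw [hL4, List.map_append, List.nodup_append]
    refine ⟨((fil_sublist _ L3).map _).nodup hnd3,
      ((fil_sublist _ R.darts).map _).nodup hRndd, ?_⟩
    intro e he1 e' he2 hee
    rw [← hee] at he2
    rcases List.mem_map.mp he1 with ⟨x, hx, hfx⟩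
    rcases List.mem_map.mp he2 with ⟨y, hy, hfy⟩
    have hyE := (mem_fil.mp hy).2
    apply hyE
    rw [hfy, ← hfx]
    exact List.mem_map_of_mem (mem_fil.mp hx).1
  have hsrcT4 : ∀ d ∈ L4, d.2.1 ∉ T := by
    intro d hd
    rcases List.mem_append.mp hd with h | h
    · exact hsrcT3 d (mem_fil.mp h).1
    · exact hRsrcT d (mem_fil.mp h).1
  have hiv4 : ind L4 v = 0 := by
    have h1 : ind L4 v = cnt (fun d => d.2.2 = v) B3 + cnt (fun d => d.2.2 = v) Dnew :=
      cnt_append _ _ _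
    have h2 : cnt (fun d => d.2.2 = v) B3 ≤ ind L3 v :=
      cnt_le_of_sublist _ (fil_sublist _ L3)
    have h3 : cnt (fun d => d.2.2 = v) Dnew ≤ ind R.darts v :=
      cnt_le_of_sublist _ (fil_sublist _ R.darts)
    unfold ind at h1 h2 h3 hiv3 hRiv ⊢
    omega
  have hcons4 : ∀ u, u ∉ T → u ≠ v → outd L4 u = ind L4 u := by
    intro u huT huv
    have hoApp : cnt (fun d => d.2.1 = u) L4 = cnt (fun d => d.2.1 = u) B3 + cnt (fun d => d.2.1 = u) Dnew :=
      cnt_append _ _ _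
    have hiApp : cnt (fun d => d.2.2 = u) L4 = cnt (fun d => d.2.2 = u) B3 + cnt (fun d => d.2.2 = u) Dnew :=
      cnt_append _ _ _
    have hAo := hAsplit (fun d => d.2.1 = u)
    have hAi := hAsplit (fun d => d.2.2 = u)
    have hCo := hA3congr (fun d => d.2.1 = u)
    have hCi := hA3congr (fun d => d.2.2 = u)
    have hCo' : cnt (fun d => d.2.1 = u) A3 = cnt (fun d => d.2.2 = u) Drev := hCo
    have hCi' : cnt (fun d => d.2.2 = u) A3 = cnt (fun d => d.2.1 = u) Drev := hCi
    have hRo := hRsplit (fun d => d.2.1 = u)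
    have hRi := hRsplit (fun d => d.2.2 = u)
    have hbalR := hbal R u
    rw [if_neg (fun h : tstar = u => huT (h ▸ htstarT)),
        if_neg (fun h : v = u => huv h.symm)] at hbalR
    have hc3 := hcons3 u huT huv
    unfold outd ind at hbalR hc3 ⊢
    omega
  have hov4 : outd L4 v = 4 := by
    have hoApp : cnt (fun d => d.2.1 = v) L4 = cnt (fun d => d.2.1 = v) B3 + cnt (fun d => d.2.1 = v) Dnew :=
      cnt_append _ _ _
    have hAo := hAsplit (fun d => d.2.1 = v)
    have hCo' : cnt (fun d => d.2.1 = v) A3 = cnt (fun d => d.2.2 = v) Drev :=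
      hA3congr (fun d => d.2.1 = v)
    have hRo := hRsplit (fun d => d.2.1 = v)
    have hDrevTgtV : cnt (fun d => d.2.2 = v) Drev = 0 := by
      have h := cnt_le_of_sublist (fun d : G.E × G.V × G.V => d.2.2 = v)
        (fil_sublist (fun d => d.1 ∈ L3.map Prod.fst) R.darts)
      rw [← hDrev] at h
      unfold ind at hRiv
      omega
    have hDrevSrcV : cnt (fun d => d.2.1 = v) Drev = 0 := by
      apply cnt_eq_zero_iff.mpr
      intro d hd hdv
      have hrev := hrevL3 d hd
      have : 1 ≤ ind L3 v := cnt_pos_iff.mpr ⟨(d.1, d.2.2, d.2.1), hrev, hdv⟩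
      omega
    unfold outd at hov3 hRov ⊢
    omega
  have hit4 : ∀ i : Fin 3, 1 ≤ ind L4 (t i) := by
    intro i
    obtain ⟨d3, hd3L3, hd3t⟩ := cnt_pos_iff.mp (hit3 i)
    have hd3B : d3 ∈ B3 := by
      apply mem_fil.mpr
      refine ⟨hd3L3, ?_⟩
      intro hE
      rcases List.mem_map.mp hE with ⟨dR, hdR, hfst⟩
      have hrc := hRres dR hdR
      rcases hrc with h | h
      · exact h (hfst ▸ List.mem_map_of_mem hd3L3)
      · have heq : (dR.1, dR.2.2, dR.2.1) = d3 :=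
          List.inj_on_of_nodup_map hnd3 h hd3L3 (by rw [hfst])
        have : dR.2.1 = t i := by
          have := congrArg (fun z => z.2.2) heq
          simpa using (this.trans hd3t)
        exact hRsrcT dR hdR (this ▸ ht i)
    apply cnt_pos_iff.mpr
    exact ⟨d3, List.mem_append.mpr (Or.inl hd3B), hd3t⟩
  have hG4 : AugAux.Good v T L4 := ⟨hval4, hnd4, hsrcT4, hiv4, hcons4⟩
  -- extract the four paths
  obtain ⟨X0, L5, hX0sub, hX0nd, hX0T, hG5, hL5sub, hL5dis, hov5, hipres5⟩ :=
    AugAux.step_lemma hv hG4 (ht 0) (hit4 0)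
  have h10 : t 1 ≠ t 0 := fun h => (by decide : (1 : Fin 3) ≠ 0) (htinj h)
  have h20 : t 2 ≠ t 0 := fun h => (by decide : (2 : Fin 3) ≠ 0) (htinj h)
  have h21 : t 2 ≠ t 1 := fun h => (by decide : (2 : Fin 3) ≠ 1) (htinj h)
  obtain ⟨X1, L6, hX1sub, hX1nd, hX1T, hG6, hL6sub, hL6dis, hov6, hipres6⟩ :=
    AugAux.step_lemma hv hG5 (ht 1)
      (by rw [hipres5 (t 1) (ht 1) h10]; exact hit4 1)
  obtain ⟨X2, L7, hX2sub, hX2nd, hX2T, hG7, hL7sub, hL7dis, hov7, hipres7⟩ :=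
    AugAux.step_lemma hv hG6 (ht 2)
      (by rw [hipres6 (t 2) (ht 2) h21, hipres5 (t 2) (ht 2) h20]; exact hit4 2)
  have hov7' : 1 ≤ outd L7 v := by omega
  obtain ⟨wlast, hwlastT, hwind⟩ := AugAux.exists_sink hv hG7 hov7'
  obtain ⟨X3, L8, hX3sub, hX3nd, hX3T, hG8, hL8sub, hL8dis, hov8, hipres8⟩ :=
    AugAux.step_lemma hv hG7 hwlastT hwind
  -- edge-disjointness of the trails
  have hDisj01 : ∀ e ∈ X0.edges, e ∉ X1.edges := by
    intro e he0 he1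
    rw [edges_eq_darts_map] at he1
    rcases List.mem_map.mp he1 with ⟨d, hd, hfst⟩
    exact hL5dis d (hX1sub d hd) (hfst ▸ he0)
  have hDisj02 : ∀ e ∈ X0.edges, e ∉ X2.edges := by
    intro e he0 he2
    rw [edges_eq_darts_map] at he2
    rcases List.mem_map.mp he2 with ⟨d, hd, hfst⟩
    exact hL5dis d (hL6sub d (hX2sub d hd)) (hfst ▸ he0)
  have hDisj03 : ∀ e ∈ X0.edges, e ∉ X3.edges := by
    intro e he0 he3
    rw [edges_eq_darts_map] at he3
    rcases List.mem_map.mp he3 with ⟨d, hd, hfst⟩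
    exact hL5dis d (hL6sub d (hL7sub d (hX3sub d hd))) (hfst ▸ he0)
  have hDisj12 : ∀ e ∈ X1.edges, e ∉ X2.edges := by
    intro e he1 he2
    rw [edges_eq_darts_map] at he2
    rcases List.mem_map.mp he2 with ⟨d, hd, hfst⟩
    exact hL6dis d (hX2sub d hd) (hfst ▸ he1)
  have hDisj13 : ∀ e ∈ X1.edges, e ∉ X3.edges := by
    intro e he1 he3
    rw [edges_eq_darts_map] at he3
    rcases List.mem_map.mp he3 with ⟨d, hd, hfst⟩
    exact hL6dis d (hL7sub d (hX3sub d hd)) (hfst ▸ he1)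
  have hDisj23 : ∀ e ∈ X2.edges, e ∉ X3.edges := by
    intro e he2 he3
    rw [edges_eq_darts_map] at he3
    rcases List.mem_map.mp he3 with ⟨d, hd, hfst⟩
    exact hL7dis d (hX3sub d hd) (hfst ▸ he2)
  -- bypass to simple paths
  obtain ⟨B0, hB0path, hB0d, hB0s⟩ := exists_bypass X0
  obtain ⟨B1, hB1path, hB1d, hB1s⟩ := exists_bypass X1
  obtain ⟨B2, hB2path, hB2d, hB2s⟩ := exists_bypass X2
  obtain ⟨B3', hB3path, hB3d, hB3s⟩ := exists_bypass X3
  have hBe0 : ∀ e ∈ B0.edges, e ∈ X0.edges := by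
    rw [edges_eq_darts_map, edges_eq_darts_map]
    exact fun e he => (hB0d.map Prod.fst).mem he
  have hBe1 : ∀ e ∈ B1.edges, e ∈ X1.edges := by
    rw [edges_eq_darts_map, edges_eq_darts_map]
    exact fun e he => (hB1d.map Prod.fst).mem he
  have hBe2 : ∀ e ∈ B2.edges, e ∈ X2.edges := by
    rw [edges_eq_darts_map, edges_eq_darts_map]
    exact fun e he => (hB2d.map Prod.fst).mem he
  have hBe3 : ∀ e ∈ B3'.edges, e ∈ X3.edges := by
    rw [edges_eq_darts_map, edges_eq_darts_map]
    exact fun e he => (hB3d.map Prod.fst).mem he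
  have hd01 : ∀ e ∈ B0.edges, e ∉ B1.edges :=
    fun e h0 h1 => hDisj01 e (hBe0 e h0) (hBe1 e h1)
  have hd02 : ∀ e ∈ B0.edges, e ∉ B2.edges :=
    fun e h0 h1 => hDisj02 e (hBe0 e h0) (hBe2 e h1)
  have hd03 : ∀ e ∈ B0.edges, e ∉ B3'.edges :=
    fun e h0 h1 => hDisj03 e (hBe0 e h0) (hBe3 e h1)
  have hd12 : ∀ e ∈ B1.edges, e ∉ B2.edges :=
    fun e h0 h1 => hDisj12 e (hBe1 e h0) (hBe2 e h1)
  have hd13 : ∀ e ∈ B1.edges, e ∉ B3'.edges :=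
    fun e h0 h1 => hDisj13 e (hBe1 e h0) (hBe3 e h1)
  have hd23 : ∀ e ∈ B2.edges, e ∉ B3'.edges :=
    fun e h0 h1 => hDisj23 e (hBe2 e h0) (hBe3 e h1)
  have hd10 : ∀ e ∈ B1.edges, e ∉ B0.edges := fun e h1 h0 => hd01 e h0 h1
  have hd20 : ∀ e ∈ B2.edges, e ∉ B0.edges := fun e h1 h0 => hd02 e h0 h1
  have hd30 : ∀ e ∈ B3'.edges, e ∉ B0.edges := fun e h1 h0 => hd03 e h0 h1
  have hd21 : ∀ e ∈ B2.edges, e ∉ B1.edges := fun e h1 h0 => hd12 e h0 h1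
  have hd31 : ∀ e ∈ B3'.edges, e ∉ B1.edges := fun e h1 h0 => hd13 e h0 h1
  have hd32 : ∀ e ∈ B3'.edges, e ∉ B2.edges := fun e h1 h0 => hd23 e h0 h1
  have hint0 : ∀ x ∈ B0.support, x ∈ T → x = t 0 :=
    fun x hx => hX0T x (hB0s x hx)
  have hint1 : ∀ x ∈ B1.support, x ∈ T → x = t 1 :=
    fun x hx => hX1T x (hB1s x hx)
  have hint2 : ∀ x ∈ B2.support, x ∈ T → x = t 2 :=
    fun x hx => hX2T x (hB2s x hx)
  have hint3 : ∀ x ∈ B3'.support, x ∈ T → x = wlast :=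
    fun x hx => hX3T x (hB3s x hx)
  refine ⟨fun i => match i with
      | ⟨0, _⟩ => t 0
      | ⟨1, _⟩ => t 1
      | ⟨2, _⟩ => t 2
      | ⟨3, _⟩ => wlast,
    fun i => match i with
      | ⟨0, _⟩ => B0
      | ⟨1, _⟩ => B1
      | ⟨2, _⟩ => B2
      | ⟨3, _⟩ => B3', ?_, ?_, ?_, ?_, ?_⟩
  · intro i
    match i with
    | ⟨0, _⟩ => exact ht 0
    | ⟨1, _⟩ => exact ht 1
    | ⟨2, _⟩ => exact ht 2
    | ⟨3, _⟩ => exact hwlastT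
  · intro i
    match i with
    | ⟨0, _⟩ => exact hB0path
    | ⟨1, _⟩ => exact hB1path
    | ⟨2, _⟩ => exact hB2path
    | ⟨3, _⟩ => exact hB3path
  · intro i
    match i with
    | ⟨0, _⟩ => rfl
    | ⟨1, _⟩ => rfl
    | ⟨2, _⟩ => rfl
  · intro i
    match i with
    | ⟨0, _⟩ => exact hint0
    | ⟨1, _⟩ => exact hint1
    | ⟨2, _⟩ => exact hint2
    | ⟨3, _⟩ => exact hint3
  · intro i j hij
    match i, j with
    | ⟨0, _⟩, ⟨0, _⟩ => exact absurd rfl hij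
    | ⟨0, _⟩, ⟨1, _⟩ => exact hd01
    | ⟨0, _⟩, ⟨2, _⟩ => exact hd02
    | ⟨0, _⟩, ⟨3, _⟩ => exact hd03
    | ⟨1, _⟩, ⟨0, _⟩ => exact hd10
    | ⟨1, _⟩, ⟨1, _⟩ => exact absurd rfl hij
    | ⟨1, _⟩, ⟨2, _⟩ => exact hd12
    | ⟨1, _⟩, ⟨3, _⟩ => exact hd13
    | ⟨2, _⟩, ⟨0, _⟩ => exact hd20
    | ⟨2, _⟩, ⟨1, _⟩ => exact hd21
    | ⟨2, _⟩, ⟨2, _⟩ => exact absurd rfl hij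
    | ⟨2, _⟩, ⟨3, _⟩ => exact hd23
    | ⟨3, _⟩, ⟨0, _⟩ => exact hd30
    | ⟨3, _⟩, ⟨1, _⟩ => exact hd31
    | ⟨3, _⟩, ⟨2, _⟩ => exact hd32
    | ⟨3, _⟩, ⟨3, _⟩ => exact absurd rfl hij
end
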